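/- arXiv:2003.00546 — 11 statements merged into one kernel-verified Lean document; each statement's English description precedes it below -/
import Mathlib

section
/- Let H be a complex Hilbert space, (Hᵢ)_{i∈ℕ} a sequence of complex Hilbert spaces, (Tᵢ : H → Hᵢ)_{i∈ℕ} a sequence of bounded linear operators, and B > 0. Then (Tᵢ) is a Bessel sequence of operators with bound B (i.e. Σ_{i∈ℕ} ‖Tᵢ x‖² ≤ B‖x‖² for all x ∈ H) if and only if for every x ∈ H the series Σ_{i∈ℕ} Tᵢ†(Tᵢ x) converges in H and the resulting map S : H → H, S x = Σ_{i∈ℕ} Tᵢ†(Tᵢ x), is a bounded linear operator with ‖S‖ ≤ B. -/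
open scoped ComplexInnerProductSpace

open ContinuousLinearMap Finset in
private lemma bessel_finset_bound
    {H : Type*} [NormedAddCommGroup H] [InnerProductSpace ℂ H] [CompleteSpace H]
    {G : ℕ → Type*} [∀ i, NormedAddCommGroup (G i)] [∀ i, InnerProductSpace ℂ (G i)]
    [∀ i, CompleteSpace (G i)]
    (T : ∀ i, H →L[ℂ] G i) (B : ℝ) (hB0 : 0 ≤ B)
    (hsum : ∀ x : H, Summable fun i => ‖T i x‖ ^ 2)
    (hb : ∀ x : H, ∑' i, ‖T i x‖ ^ 2 ≤ B * ‖x‖ ^ 2)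
    (x : H) (F : Finset ℕ) :
    ‖∑ i ∈ F, adjoint (T i) (T i x)‖ ≤ Real.sqrt B * Real.sqrt (∑ i ∈ F, ‖T i x‖ ^ 2) := by
  set v := ∑ i ∈ F, adjoint (T i) (T i x) with hv
  have hrhs0 : 0 ≤ Real.sqrt B * Real.sqrt (∑ i ∈ F, ‖T i x‖ ^ 2) := by positivity
  rcases eq_or_lt_of_le (norm_nonneg v) with h0 | h0
  · rw [← h0]; exact hrhs0
  have key : ‖v‖ ^ 2 ≤ (Real.sqrt B * Real.sqrt (∑ i ∈ F, ‖T i x‖ ^ 2)) * ‖v‖ := by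
    have h1 : ‖v‖ ^ 2 = RCLike.re (⟪v, v⟫) := norm_sq_eq_re_inner v
    have h2 : ⟪v, v⟫ = ∑ i ∈ F, ⟪T i x, T i v⟫ := by
      rw [hv, sum_inner]
      exact Finset.sum_congr rfl fun i _ => adjoint_inner_left (T i) v (T i x)
    have h3 : ‖v‖ ^ 2 ≤ ∑ i ∈ F, ‖T i x‖ * ‖T i v‖ := by
      rw [h1, h2, map_sum]
      exact Finset.sum_le_sum fun i _ => re_inner_le_norm _ _
    have h4 : ∑ i ∈ F, ‖T i x‖ * ‖T i v‖ ≤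
        Real.sqrt (∑ i ∈ F, ‖T i x‖ ^ 2) * Real.sqrt (∑ i ∈ F, ‖T i v‖ ^ 2) :=
      Real.sum_mul_le_sqrt_mul_sqrt F _ _
    have h5 : Real.sqrt (∑ i ∈ F, ‖T i v‖ ^ 2) ≤ Real.sqrt B * ‖v‖ := by
      have : ∑ i ∈ F, ‖T i v‖ ^ 2 ≤ B * ‖v‖ ^ 2 :=
        le_trans (Summable.sum_le_tsum F (fun i _ => by positivity) (hsum v)) (hb v)
      calc Real.sqrt (∑ i ∈ F, ‖T i v‖ ^ 2) ≤ Real.sqrt (B * ‖v‖ ^ 2) :=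
            Real.sqrt_le_sqrt this
        _ = Real.sqrt B * ‖v‖ := by
            rw [Real.sqrt_mul hB0, Real.sqrt_sq (norm_nonneg v)]
    calc ‖v‖ ^ 2 ≤ ∑ i ∈ F, ‖T i x‖ * ‖T i v‖ := h3
      _ ≤ Real.sqrt (∑ i ∈ F, ‖T i x‖ ^ 2) * Real.sqrt (∑ i ∈ F, ‖T i v‖ ^ 2) := h4
      _ ≤ Real.sqrt (∑ i ∈ F, ‖T i x‖ ^ 2) * (Real.sqrt B * ‖v‖) := by
          exact mul_le_mul_of_nonneg_left h5 (Real.sqrt_nonneg _)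
      _ = (Real.sqrt B * Real.sqrt (∑ i ∈ F, ‖T i x‖ ^ 2)) * ‖v‖ := by ring
  nlinarith [key, h0, hrhs0]

/-- A sequence of bounded operators `Tᵢ : H → Hᵢ` is a Bessel sequence of operators with bound
`B` iff `x ↦ Σᵢ Tᵢ† (Tᵢ x)` is a well-defined bounded operator `S` on `H` with `‖S‖ ≤ B`. -/
theorem bessel_iff_frame_operator_bounded
    {H : Type*} [NormedAddCommGroup H] [InnerProductSpace ℂ H] [CompleteSpace H]
    (G : ℕ → Type*) [∀ i, NormedAddCommGroup (G i)] [∀ i, InnerProductSpace ℂ (G i)]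
    [∀ i, CompleteSpace (G i)]
    (T : ∀ i, H →L[ℂ] G i) (B : ℝ) (hB : 0 < B) :
    ((∀ x : H, Summable fun i => ‖T i x‖ ^ 2) ∧
      ∀ x : H, ∑' i, ‖T i x‖ ^ 2 ≤ B * ‖x‖ ^ 2) ↔
    ∃ S : H →L[ℂ] H,
      (∀ x : H, HasSum (fun i => ContinuousLinearMap.adjoint (T i) (T i x)) (S x)) ∧
      ‖S‖ ≤ B := by
  constructor
  · rintro ⟨hsum, hb⟩
    have hB0 : (0:ℝ) ≤ B := hB.le
    -- summability of the frame operator series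
    have hSummable : ∀ x : H, Summable fun i => ContinuousLinearMap.adjoint (T i) (T i x) := by
      intro x
      rw [summable_iff_vanishing]
      intro e he
      rcases Metric.mem_nhds_iff.mp he with ⟨ε, hε, hball⟩
      have hδ : (0:ℝ) < (ε / (Real.sqrt B + 1)) ^ 2 := by positivity
      obtain ⟨s, hs⟩ := (summable_iff_vanishing.mp (hsum x))
        (Metric.ball 0 ((ε / (Real.sqrt B + 1)) ^ 2)) (Metric.ball_mem_nhds _ hδ)
      refine ⟨s, fun t ht => hball ?_⟩
      simp only [Metric.mem_ball, dist_zero_right]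
      have htail : ∑ i ∈ t, ‖T i x‖ ^ 2 < (ε / (Real.sqrt B + 1)) ^ 2 := by
        have := hs t ht
        simpa [Real.norm_eq_abs, abs_of_nonneg
          (Finset.sum_nonneg fun i _ => by positivity : (0:ℝ) ≤ ∑ i ∈ t, ‖T i x‖ ^ 2),
          Metric.mem_ball, dist_zero_right] using this
      have hsq : Real.sqrt (∑ i ∈ t, ‖T i x‖ ^ 2) < ε / (Real.sqrt B + 1) := by
        have h1 : Real.sqrt (∑ i ∈ t, ‖T i x‖ ^ 2) <
            Real.sqrt ((ε / (Real.sqrt B + 1)) ^ 2) := by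
          exact (Real.sqrt_lt_sqrt (Finset.sum_nonneg fun i _ => by positivity) htail)
        rwa [Real.sqrt_sq (by positivity)] at h1
      calc ‖∑ i ∈ t, ContinuousLinearMap.adjoint (T i) (T i x)‖
          ≤ Real.sqrt B * Real.sqrt (∑ i ∈ t, ‖T i x‖ ^ 2) :=
            bessel_finset_bound T B hB0 hsum hb x t
        _ ≤ (Real.sqrt B + 1) * Real.sqrt (∑ i ∈ t, ‖T i x‖ ^ 2) := by
            exact mul_le_mul_of_nonneg_right (by linarith) (Real.sqrt_nonneg _)
        _ < (Real.sqrt B + 1) * (ε / (Real.sqrt B + 1)) := by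
            exact mul_lt_mul_of_pos_left hsq (by positivity)
        _ = ε := by field_simp
    -- bound on the tsum
    have hbound : ∀ x : H,
        ‖∑' i, ContinuousLinearMap.adjoint (T i) (T i x)‖ ≤ B * ‖x‖ := by
      intro x
      refine le_of_tendsto ((hSummable x).hasSum.norm) (Filter.Eventually.of_forall fun F => ?_)
      calc ‖∑ i ∈ F, ContinuousLinearMap.adjoint (T i) (T i x)‖
          ≤ Real.sqrt B * Real.sqrt (∑ i ∈ F, ‖T i x‖ ^ 2) :=
            bessel_finset_bound T B hB0 hsum hb x F
        _ ≤ Real.sqrt B * Real.sqrt (B * ‖x‖ ^ 2) := by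
            refine mul_le_mul_of_nonneg_left (Real.sqrt_le_sqrt ?_) (Real.sqrt_nonneg _)
            exact le_trans (Summable.sum_le_tsum F (fun i _ => by positivity) (hsum x)) (hb x)
        _ = B * ‖x‖ := by
            rw [Real.sqrt_mul hB0, Real.sqrt_sq (norm_nonneg x), ← mul_assoc,
              Real.mul_self_sqrt hB0]
    -- the frame operator
    let f : H →ₗ[ℂ] H :=
      { toFun := fun x => ∑' i, ContinuousLinearMap.adjoint (T i) (T i x)
        map_add' := fun x y => by
          simp only [map_add]
          exact Summable.tsum_add (hSummable x) (hSummable y)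
        map_smul' := fun c x => by
          simp only [map_smul, RingHom.id_apply]
          exact Summable.tsum_const_smul c (hSummable x) }
    refine ⟨f.mkContinuous B hbound, fun x => ?_, f.mkContinuous_norm_le hB0 hbound⟩
    exact (hSummable x).hasSum
  · rintro ⟨S, hS, hnorm⟩
    have key : ∀ x : H, HasSum (fun i => ‖T i x‖ ^ 2) (RCLike.re (⟪x, S x⟫)) := by
      intro x
      have h1 : HasSum (fun i => ⟪x, ContinuousLinearMap.adjoint (T i) (T i x)⟫)
          (⟪x, S x⟫) := (innerSL ℂ x).hasSum (hS x)
      have h2 := Complex.reCLM.hasSum h1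
      convert h2 using 2 with i
      rw [ContinuousLinearMap.adjoint_inner_right]
      simp only [Complex.reCLM_apply]
      exact (norm_sq_eq_re_inner (𝕜 := ℂ) (T i x)).symm ▸ rfl
      rfl
    constructor
    · exact fun x => (key x).summable
    · intro x
      rw [(key x).tsum_eq]
      calc RCLike.re (⟪x, S x⟫) ≤ ‖x‖ * ‖S x‖ := re_inner_le_norm x (S x)
        _ ≤ ‖x‖ * (B * ‖x‖) := by
            exact mul_le_mul_of_nonneg_left
              (le_trans (S.le_opNorm x) (mul_le_mul_of_nonneg_right hnorm (norm_nonneg x)))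
              (norm_nonneg x)
        _ = B * ‖x‖ ^ 2 := by ring
end

section
/- Let H be a complex Hilbert space, (Hᵢ)_{i∈ℕ} a sequence of complex Hilbert spaces, (Tᵢ : H → Hᵢ)_{i∈ℕ} a sequence of bounded linear operators, and for each i let (e_{i,k})_{k∈ℕ} be a Hilbert (orthonormal) basis of Hᵢ. Put x_{i,k} := Tᵢ†(e_{i,k}) ∈ H. Then, for constants 0 < r₁ ≤ r₂ < ∞, (Tᵢ) is a frame of operators for H with bounds r₁, r₂ if and only if the doubly indexed family (x_{i,k})_{(i,k)∈ℕ×ℕ} is a frame for H with bounds r₁, r₂, i.e. r₁‖x‖² ≤ Σ_{i,k} |⟨x_{i,k}, x⟩|² ≤ r₂‖x‖² for all x ∈ H. -/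
open scoped ComplexInnerProductSpace

lemma parseval_hasSum {E : Type*} [NormedAddCommGroup E] [InnerProductSpace ℂ E]
    (b : HilbertBasis ℕ ℂ E) (y : E) :
    HasSum (fun k => ‖⟪b k, y⟫‖ ^ 2) (‖y‖ ^ 2) := by
  have h := b.hasSum_inner_mul_inner y y
  rw [inner_self_eq_norm_sq_to_K] at h
  have h2 : HasSum (fun k => ((‖⟪b k, y⟫‖ ^ 2 : ℝ) : ℂ)) ((‖y‖ ^ 2 : ℝ) : ℂ) := by
    convert h using 2 with k
    case e'_6 => push_cast; norm_cast
    case e'_3 => rfl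
    rw [← inner_conj_symm (b k) y, RCLike.mul_conj, RCLike.norm_conj]
    push_cast
    norm_cast
  exact Complex.hasSum_ofReal.mp h2

/-- `(Tᵢ)` is a frame of operators for `H` with bounds `r₁, r₂` iff the induced sequence
`x_{i,k} = Tᵢ†(e_{i,k})` is a frame for `H` with the same bounds. -/
theorem frame_of_operators_iff_induced_frame
    {H : Type*} [NormedAddCommGroup H] [InnerProductSpace ℂ H] [CompleteSpace H]
    (G : ℕ → Type*) [∀ i, NormedAddCommGroup (G i)] [∀ i, InnerProductSpace ℂ (G i)]
    [∀ i, CompleteSpace (G i)]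
    (T : ∀ i, H →L[ℂ] G i) (e : ∀ i, HilbertBasis ℕ ℂ (G i))
    (r₁ r₂ : ℝ) (hr₁ : 0 < r₁) (hr₁₂ : r₁ ≤ r₂) :
    (∀ x : H,
        r₁ * ‖x‖ ^ 2 ≤ ∑' i, ‖T i x‖ ^ 2 ∧ ∑' i, ‖T i x‖ ^ 2 ≤ r₂ * ‖x‖ ^ 2) ↔
    (∀ x : H,
        r₁ * ‖x‖ ^ 2 ≤
            ∑' p : ℕ × ℕ, ‖⟪ContinuousLinearMap.adjoint (T p.1) (e p.1 p.2), x⟫‖ ^ 2 ∧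
          ∑' p : ℕ × ℕ, ‖⟪ContinuousLinearMap.adjoint (T p.1) (e p.1 p.2), x⟫‖ ^ 2 ≤
            r₂ * ‖x‖ ^ 2) := by
  have key : ∀ x : H,
      (∑' p : ℕ × ℕ, ‖⟪ContinuousLinearMap.adjoint (T p.1) (e p.1 p.2), x⟫‖ ^ 2)
        = ∑' i, ‖T i x‖ ^ 2 := by
    intro x
    have hadj : ∀ p : ℕ × ℕ,
        ‖⟪ContinuousLinearMap.adjoint (T p.1) (e p.1 p.2), x⟫‖ ^ 2
          = ‖⟪e p.1 p.2, T p.1 x⟫‖ ^ 2 := by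
      intro p
      rw [ContinuousLinearMap.adjoint_inner_left]
    simp_rw [hadj]
    set F : ℕ × ℕ → ℝ := fun p => ‖⟪e p.1 p.2, T p.1 x⟫‖ ^ 2 with hF
    have hfib : ∀ i, HasSum (fun k => F (i, k)) (‖T i x‖ ^ 2) := fun i =>
      parseval_hasSum (e i) (T i x)
    have hnn : ∀ p, 0 ≤ F p := fun p => by positivity
    by_cases hs : Summable F
    · rw [Summable.tsum_prod' hs fun i => (hfib i).summable]
      exact tsum_congr fun i => (hfib i).tsum_eq
    · rw [tsum_eq_zero_of_not_summable hs, tsum_eq_zero_of_not_summable]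
      intro hsum
      apply hs
      rw [summable_prod_of_nonneg hnn]
      refine ⟨fun i => (hfib i).summable, ?_⟩
      convert hsum using 1
      exact funext fun i => (hfib i).tsum_eq
  constructor
  · intro h x; rw [key x]; exact h x
  · intro h x; rw [← key x]; exact h x
end

section
/- Let H be a complex Hilbert space, (Hᵢ)_{i∈ℕ} a sequence of complex Hilbert spaces, (Tᵢ : H → Hᵢ)_{i∈ℕ} a frame of operators for H with bounds r₁, r₂, and for each i let (e_{i,k})_{k∈ℕ} be a Hilbert (orthonormal) basis of Hᵢ; put x_{i,k} := Tᵢ†(e_{i,k}). Then the frame operator of (Tᵢ) coincides with the frame operator of the induced frame (x_{i,k}): for every x ∈ H, Σ_{i∈ℕ} Tᵢ†(Tᵢ x) = Σ_{i,k∈ℕ} ⟨x_{i,k}, x⟩ x_{i,k} (both series converge in H). -/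
open scoped ComplexInnerProductSpace

/-- The frame operator of a frame of operators `(Tᵢ)` coincides with the frame operator of the
induced frame `(x_{i,k}) = (Tᵢ†(e_{i,k}))`. -/
theorem frame_operator_eq_induced_frame_operator
    {H : Type*} [NormedAddCommGroup H] [InnerProductSpace ℂ H] [CompleteSpace H]
    (G : ℕ → Type*) [∀ i, NormedAddCommGroup (G i)] [∀ i, InnerProductSpace ℂ (G i)]
    [∀ i, CompleteSpace (G i)]
    (T : ∀ i, H →L[ℂ] G i) (e : ∀ i, HilbertBasis ℕ ℂ (G i))
    (r₁ r₂ : ℝ) (hr₁ : 0 < r₁) (hr₁₂ : r₁ ≤ r₂)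
    (hframe : ∀ x : H,
        r₁ * ‖x‖ ^ 2 ≤ ∑' i, ‖T i x‖ ^ 2 ∧ ∑' i, ‖T i x‖ ^ 2 ≤ r₂ * ‖x‖ ^ 2) :
    ∀ x : H, ∃ y : H,
      HasSum (fun i => ContinuousLinearMap.adjoint (T i) (T i x)) y ∧
      HasSum
        (fun p : ℕ × ℕ =>
          ⟪ContinuousLinearMap.adjoint (T p.1) (e p.1 p.2), x⟫ •
            ContinuousLinearMap.adjoint (T p.1) (e p.1 p.2))
        y := by
  have hr₂ : 0 < r₂ := hr₁.trans_le hr₁₂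
  -- summability of the squared norms
  have hsq : ∀ v : H, Summable fun i => ‖T i v‖ ^ 2 := by
    intro v
    by_cases hv : v = 0
    · subst hv; simp only [map_zero, norm_zero]
      simpa using summable_zero
    · by_contra h
      have h0 := (hframe v).1
      rw [tsum_eq_zero_of_not_summable h] at h0
      have hvn : 0 < ‖v‖ := norm_pos_iff.mpr hv
      have : 0 < r₁ * ‖v‖ ^ 2 := by positivity
      linarith
  -- notation
  set X : ℕ × ℕ → H := fun p => ContinuousLinearMap.adjoint (T p.1) (e p.1 p.2) with hX
  -- fiberwise Parseval
  have hfib : ∀ (v : H) (i : ℕ),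
      HasSum (fun k => ‖⟪e i k, T i v⟫‖ ^ 2) (‖T i v‖ ^ 2) := by
    intro v i
    have h1 := ((e i).hasSum_inner_mul_inner (T i v) (T i v)).mapL Complex.reCLM
    have h2 : (fun k => Complex.reCLM (⟪T i v, e i k⟫ * ⟪e i k, T i v⟫))
        = fun k => ‖⟪e i k, T i v⟫‖ ^ 2 := by
      funext k
      have hz : (⟪T i v, e i k⟫ : ℂ) = (starRingEnd ℂ) ⟪e i k, T i v⟫ :=
        (inner_conj_symm _ _).symm
      rw [Complex.reCLM_apply, hz, Complex.conj_mul', ← Complex.ofReal_pow,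
        Complex.ofReal_re]
    rw [h2] at h1
    have h3 : Complex.reCLM (⟪T i v, T i v⟫ : ℂ) = ‖T i v‖ ^ 2 := by
      simpa using inner_self_eq_norm_sq (𝕜 := ℂ) (T i v)
    rwa [h3] at h1
  -- summability over the product index
  have hProd : ∀ v : H,
      HasSum (fun p : ℕ × ℕ => ‖⟪e p.1 p.2, T p.1 v⟫‖ ^ 2) (∑' i, ‖T i v‖ ^ 2) := by
    intro v
    have hS : Summable (fun p : ℕ × ℕ => ‖⟪e p.1 p.2, T p.1 v⟫‖ ^ 2) := by
      refine (summable_prod_of_nonneg fun p => by positivity).2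
        ⟨fun i => (hfib v i).summable, ?_⟩
      have : (fun i => ∑' k, ‖⟪e i k, T i v⟫‖ ^ 2) = fun i => ‖T i v‖ ^ 2 :=
        funext fun i => (hfib v i).tsum_eq
      rw [this]; exact hsq v
    have h1 := hS.hasSum
    have h2 := h1.prod_fiberwise (hfib v)
    rwa [← h2.tsum_eq] at h1
  intro x
  set c : ℕ × ℕ → ℂ := fun p => ⟪X p, x⟫ with hc
  have hcnorm : ∀ p : ℕ × ℕ, ‖c p‖ = ‖⟪e p.1 p.2, T p.1 x⟫‖ := by
    intro p
    rw [hc, hX]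
    simp only [ContinuousLinearMap.adjoint_inner_left]
  -- key finite estimate
  have key : ∀ t : Finset (ℕ × ℕ),
      ‖∑ p ∈ t, c p • X p‖ ^ 2 ≤ r₂ * ∑ p ∈ t, ‖c p‖ ^ 2 := by
    intro t
    set v := ∑ p ∈ t, c p • X p with hv
    have hvv : (⟪v, v⟫ : ℂ) = ∑ p ∈ t, c p * ⟪v, X p⟫ := by
      conv_lhs => rw [hv]
      rw [inner_sum]
      exact Finset.sum_congr rfl fun p _ => inner_smul_right _ _ _
    have h1 : ‖v‖ ^ 2 ≤ ∑ p ∈ t, ‖c p‖ * ‖⟪v, X p⟫‖ := by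
      calc ‖v‖ ^ 2 = RCLike.re (⟪v, v⟫ : ℂ) := (inner_self_eq_norm_sq v).symm
        _ ≤ ‖(⟪v, v⟫ : ℂ)‖ := RCLike.re_le_norm _
        _ = ‖∑ p ∈ t, c p * ⟪v, X p⟫‖ := by rw [hvv]
        _ ≤ ∑ p ∈ t, ‖c p * ⟪v, X p⟫‖ := norm_sum_le _ _
        _ = ∑ p ∈ t, ‖c p‖ * ‖⟪v, X p⟫‖ := by simp [norm_mul]
    have hCS := Finset.sum_mul_sq_le_sq_mul_sq t (fun p => ‖c p‖) (fun p => ‖⟪v, X p⟫‖)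
    have hB : ∑ p ∈ t, ‖⟪v, X p⟫‖ ^ 2 ≤ r₂ * ‖v‖ ^ 2 := by
      have heq : ∀ p : ℕ × ℕ, ‖⟪v, X p⟫‖ = ‖⟪e p.1 p.2, T p.1 v⟫‖ := by
        intro p
        rw [hX]
        simp only [ContinuousLinearMap.adjoint_inner_right]
        rw [← inner_conj_symm (T p.1 v) (e p.1 p.2)]
        exact RCLike.norm_conj _
      calc ∑ p ∈ t, ‖⟪v, X p⟫‖ ^ 2 = ∑ p ∈ t, ‖⟪e p.1 p.2, T p.1 v⟫‖ ^ 2 := by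
            exact Finset.sum_congr rfl fun p _ => by rw [heq]
        _ ≤ ∑' p : ℕ × ℕ, ‖⟪e p.1 p.2, T p.1 v⟫‖ ^ 2 :=
            Summable.sum_le_tsum t (fun p _ => by positivity) (hProd v).summable
        _ = ∑' i, ‖T i v‖ ^ 2 := (hProd v).tsum_eq
        _ ≤ r₂ * ‖v‖ ^ 2 := (hframe v).2
    have hA : (0:ℝ) ≤ ∑ p ∈ t, ‖c p‖ ^ 2 := Finset.sum_nonneg fun p _ => by positivity
    have h2 : (‖v‖ ^ 2) ^ 2 ≤ (∑ p ∈ t, ‖c p‖ ^ 2) * (r₂ * ‖v‖ ^ 2) := by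
      calc (‖v‖ ^ 2) ^ 2 ≤ (∑ p ∈ t, ‖c p‖ * ‖⟪v, X p⟫‖) ^ 2 := by
            apply pow_le_pow_left₀ (by positivity) h1
        _ ≤ (∑ p ∈ t, ‖c p‖ ^ 2) * ∑ p ∈ t, ‖⟪v, X p⟫‖ ^ 2 := hCS
        _ ≤ (∑ p ∈ t, ‖c p‖ ^ 2) * (r₂ * ‖v‖ ^ 2) := by
            exact mul_le_mul_of_nonneg_left hB hA
    by_cases hv0 : ‖v‖ ^ 2 = 0
    · rw [hv0]; positivity
    · have hv0' : 0 < ‖v‖ ^ 2 := lt_of_le_of_ne (by positivity) (Ne.symm hv0)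
      nlinarith [h2, hv0', hA]
  -- summability of the product family
  have hF : Summable (fun p : ℕ × ℕ => c p • X p) := by
    rw [summable_iff_vanishing_norm]
    intro ε hε
    have hcs : Summable (fun p : ℕ × ℕ => ‖c p‖ ^ 2) := by
      have := (hProd x).summable
      refine this.congr fun p => ?_
      rw [hcnorm]
    obtain ⟨s, hs⟩ := summable_iff_vanishing_norm.1 hcs (ε ^ 2 / r₂) (by positivity)
    refine ⟨s, fun t ht => ?_⟩
    have h1 := hs t ht
    have h2 : ∑ p ∈ t, ‖c p‖ ^ 2 < ε ^ 2 / r₂ := by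
      calc ∑ p ∈ t, ‖c p‖ ^ 2 ≤ ‖∑ p ∈ t, ‖c p‖ ^ 2‖ := le_abs_self _
        _ < ε ^ 2 / r₂ := h1
    have h3 : ‖∑ p ∈ t, c p • X p‖ ^ 2 < ε ^ 2 := by
      calc ‖∑ p ∈ t, c p • X p‖ ^ 2 ≤ r₂ * ∑ p ∈ t, ‖c p‖ ^ 2 := key t
        _ < r₂ * (ε ^ 2 / r₂) := by exact mul_lt_mul_of_pos_left h2 hr₂
        _ = ε ^ 2 := by field_simp
    exact lt_of_pow_lt_pow_left₀ 2 hε.le h3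
  -- fiberwise sums equal the frame operator terms
  have hfibF : ∀ i : ℕ,
      HasSum (fun k => c (i, k) • X (i, k)) (ContinuousLinearMap.adjoint (T i) (T i x)) := by
    intro i
    have h1 := ((e i).hasSum_repr (T i x)).mapL (ContinuousLinearMap.adjoint (T i))
    refine h1.congr_fun fun k => ?_
    rw [map_smul, (e i).repr_apply_apply, hc, hX]
    simp only [ContinuousLinearMap.adjoint_inner_left]
  refine ⟨∑' p : ℕ × ℕ, c p • X p, ?_, hF.hasSum⟩
  exact hF.hasSum.prod_fiberwise hfibF
end

section
/- Let H be a complex Hilbert space, (Hᵢ)_{i∈ℕ} a sequence of complex Hilbert spaces, and (Tᵢ : H → Hᵢ)_{i∈ℕ} a frame of operators for H with bounds r₁, r₂. Then the frame operator S satisfies ‖I − r₂⁻¹ S‖ ≤ (r₂ − r₁)/r₂ < 1; consequently S is invertible as a bounded operator on H (S is bijective and has a bounded inverse). -/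
open scoped ComplexInnerProductSpace

/-- The frame operator `S` of a frame of operators with bounds `r₁, r₂` satisfies
`‖I - r₂⁻¹ S‖ ≤ (r₂ - r₁)/r₂ < 1`; consequently `S` is invertible as a bounded operator. -/
theorem frame_operator_invertible
    {H : Type*} [NormedAddCommGroup H] [InnerProductSpace ℂ H] [CompleteSpace H]
    (G : ℕ → Type*) [∀ i, NormedAddCommGroup (G i)] [∀ i, InnerProductSpace ℂ (G i)]
    [∀ i, CompleteSpace (G i)]
    (T : ∀ i, H →L[ℂ] G i)
    (r₁ r₂ : ℝ) (hr₁ : 0 < r₁) (hr₁₂ : r₁ ≤ r₂)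
    (hframe : ∀ x : H,
        r₁ * ‖x‖ ^ 2 ≤ ∑' i, ‖T i x‖ ^ 2 ∧ ∑' i, ‖T i x‖ ^ 2 ≤ r₂ * ‖x‖ ^ 2)
    (S : H →L[ℂ] H)
    (hS : ∀ x : H, HasSum (fun i => ContinuousLinearMap.adjoint (T i) (T i x)) (S x)) :
    ‖(1 : H →L[ℂ] H) - r₂⁻¹ • S‖ ≤ (r₂ - r₁) / r₂ ∧ (r₂ - r₁) / r₂ < 1 ∧ IsUnit S := by
  have hr₂ : 0 < r₂ := hr₁.trans_le hr₁₂
  -- The quadratic form of S is the sum of the ‖T i x‖²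
  have key : ∀ x : H, ⟪S x, x⟫ = ((∑' i, ‖T i x‖ ^ 2 : ℝ) : ℂ) := by
    intro x
    have h1 : HasSum (fun i => ⟪x, ContinuousLinearMap.adjoint (T i) (T i x)⟫) ⟪x, S x⟫ :=
      (hS x).mapL (innerSL ℂ x)
    have h2 : HasSum (fun i => ((‖T i x‖ ^ 2 : ℝ) : ℂ)) ⟪x, S x⟫ := by
      refine h1.congr_fun fun i => ?_
      rw [ContinuousLinearMap.adjoint_inner_right]
      simp [inner_self_eq_norm_sq_to_K]
    have h3 : HasSum (fun i => ‖T i x‖ ^ 2) (⟪x, S x⟫.re) := by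
      simpa only [Complex.reCLM_apply, Complex.ofReal_re] using h2.mapL Complex.reCLM
    have h4 : HasSum (fun i => ((‖T i x‖ ^ 2 : ℝ) : ℂ)) ((⟪x, S x⟫.re : ℝ) : ℂ) := by
      simpa using h3.mapL Complex.ofRealCLM
    have h5 : ⟪x, S x⟫ = ((⟪x, S x⟫.re : ℝ) : ℂ) := h2.unique h4
    rw [← inner_conj_symm, h5, ← h3.tsum_eq]
    simp
  set σ : H → ℝ := fun x => ∑' i, ‖T i x‖ ^ 2 with hσ
  set c : ℝ := (r₂ - r₁) / r₂ with hc
  have hc0 : 0 ≤ c := div_nonneg (by linarith) hr₂.le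
  have hc1 : c < 1 := by rw [hc, div_lt_one hr₂]; linarith
  set A : H →L[ℂ] H := (1 : H →L[ℂ] H) - r₂⁻¹ • S with hA
  -- quadratic form of A
  have hAx : ∀ x : H, ⟪A x, x⟫ = ((‖x‖ ^ 2 - r₂⁻¹ * σ x : ℝ) : ℂ) := by
    intro x
    have : ⟪(r₂⁻¹ • S) x, x⟫ = ((r₂⁻¹ * σ x : ℝ) : ℂ) := by
      rw [ContinuousLinearMap.smul_apply]
      have h' : (r₂⁻¹ : ℝ) • S x = ((r₂⁻¹ : ℝ) : ℂ) • S x := rfl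
      rw [h', inner_smul_left, key x, Complex.conj_ofReal]
      norm_cast
    have hxx : ⟪x, x⟫ = ((‖x‖ ^ 2 : ℝ) : ℂ) := by exact_mod_cast inner_self_eq_norm_sq_to_K x
    rw [hA, ContinuousLinearMap.sub_apply, inner_sub_left, this,
      ContinuousLinearMap.one_apply, hxx]
    push_cast
    ring
  -- 0 ≤ A
  have hApos : (0 : H →L[ℂ] H) ≤ A := by
    rw [ContinuousLinearMap.nonneg_iff_isPositive, ContinuousLinearMap.isPositive_iff_complex]
    intro x
    rw [hAx x]
    have h := (hframe x).2
    constructor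
    · simp only [RCLike.re_to_complex, Complex.ofReal_re]
    · simp only [RCLike.re_to_complex, Complex.ofReal_re]
      have hle : r₂⁻¹ * σ x ≤ ‖x‖ ^ 2 := by
        rw [inv_mul_le_iff₀ hr₂]
        first
          | exact h
          | exact h.trans_eq (mul_comm _ _)
      linarith
  -- A ≤ c • 1
  have hAle : A ≤ c • (1 : H →L[ℂ] H) := by
    rw [ContinuousLinearMap.le_def, ContinuousLinearMap.isPositive_iff_complex]
    intro x
    have hinner : ⟪(c • (1 : H →L[ℂ] H) - A) x, x⟫ = ((c * ‖x‖ ^ 2 - (‖x‖ ^ 2 - r₂⁻¹ * σ x) : ℝ) : ℂ) := by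
      rw [ContinuousLinearMap.sub_apply, inner_sub_left, hAx x,
        ContinuousLinearMap.smul_apply, ContinuousLinearMap.one_apply]
      have h' : (c : ℝ) • x = ((c : ℝ) : ℂ) • x := rfl
      have hxx : ⟪x, x⟫ = ((‖x‖ ^ 2 : ℝ) : ℂ) := by exact_mod_cast inner_self_eq_norm_sq_to_K x
      rw [h', inner_smul_left, Complex.conj_ofReal, hxx]
      push_cast
      ring
    rw [hinner]
    have h := (hframe x).1
    constructor
    · simp only [RCLike.re_to_complex, Complex.ofReal_re]
    · simp only [RCLike.re_to_complex, Complex.ofReal_re]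
      have h1 : r₁ / r₂ * ‖x‖ ^ 2 ≤ r₂⁻¹ * σ x := by
        rw [div_mul_eq_mul_div, div_le_iff₀ hr₂, mul_comm (r₂⁻¹ * σ x) r₂,
          ← mul_assoc, mul_inv_cancel₀ hr₂.ne', one_mul]
        linarith
      have h2 : c * ‖x‖ ^ 2 - (‖x‖ ^ 2 - r₁ / r₂ * ‖x‖ ^ 2) = 0 := by
        rw [hc]; field_simp; ring
      nlinarith [sq_nonneg ‖x‖]
  -- norm bound
  have hnorm : ‖A‖ ≤ c := by
    calc ‖A‖ ≤ ‖c • (1 : H →L[ℂ] H)‖ :=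
          CStarAlgebra.norm_le_norm_of_nonneg_of_le hApos hAle
      _ = |c| * ‖(1 : H →L[ℂ] H)‖ := by rw [norm_smul, Real.norm_eq_abs]
      _ ≤ c * 1 := by
          rw [abs_of_nonneg hc0]
          exact mul_le_mul_of_nonneg_left
            (by rw [ContinuousLinearMap.one_def]; exact ContinuousLinearMap.norm_id_le) hc0
      _ = c := mul_one c
  refine ⟨hnorm, hc1, ?_⟩
  -- invertibility
  have hbound : ∀ x : H, ‖x‖ ^ 2 * ((⟨r₁, hr₁.le⟩ : NNReal) : ℝ) ≤ ‖⟪S x, x⟫‖ := by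
    intro x
    rw [key x]
    have h1 := (hframe x).1
    have h2 : (0 : ℝ) ≤ σ x := le_trans (by positivity) h1
    calc ‖x‖ ^ 2 * ((⟨r₁, hr₁.le⟩ : NNReal) : ℝ) = r₁ * ‖x‖ ^ 2 := by
          simp [mul_comm]
      _ ≤ σ x := h1
      _ = ‖((σ x : ℝ) : ℂ)‖ := by
          rw [Complex.norm_real, Real.norm_eq_abs, abs_of_nonneg h2]
  exact ContinuousLinearMap.isUnit_of_forall_le_norm_inner_map S (c := ⟨r₁, hr₁.le⟩)
    (by exact_mod_cast hr₁) hbound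
end

section
/- Let H be a complex Hilbert space, (Hᵢ)_{i∈ℕ} a sequence of complex Hilbert spaces, and (Tᵢ : H → Hᵢ)_{i∈ℕ} a frame of operators for H with bounds r₁, r₂, with frame operator S. Assume S is invertible with bounded inverse S⁻¹. Then the operators Uᵢ := Tᵢ ∘ S⁻¹ : H → Hᵢ form a frame of operators for H with bounds 1/r₂ and 1/r₁: (1/r₂)‖x‖² ≤ Σ_{i∈ℕ} ‖Uᵢ x‖² ≤ (1/r₁)‖x‖² for all x ∈ H. -/
open scoped ComplexInnerProductSpace

/-- If `(Tᵢ)` is a frame of operators with bounds `r₁, r₂` and frame operator `S` (with bounded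
inverse `S⁻¹`), then `Uᵢ = Tᵢ ∘ S⁻¹` is a frame of operators with bounds `1/r₂` and `1/r₁`. -/
theorem dual_frame_of_operators
    {H : Type*} [NormedAddCommGroup H] [InnerProductSpace ℂ H] [CompleteSpace H]
    (G : ℕ → Type*) [∀ i, NormedAddCommGroup (G i)] [∀ i, InnerProductSpace ℂ (G i)]
    [∀ i, CompleteSpace (G i)]
    (T : ∀ i, H →L[ℂ] G i)
    (r₁ r₂ : ℝ) (hr₁ : 0 < r₁) (hr₁₂ : r₁ ≤ r₂)
    (hframe : ∀ x : H,
        r₁ * ‖x‖ ^ 2 ≤ ∑' i, ‖T i x‖ ^ 2 ∧ ∑' i, ‖T i x‖ ^ 2 ≤ r₂ * ‖x‖ ^ 2)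
    (S Sinv : H →L[ℂ] H)
    (hS : ∀ x : H, HasSum (fun i => ContinuousLinearMap.adjoint (T i) (T i x)) (S x))
    (hSinv₁ : S.comp Sinv = 1) (hSinv₂ : Sinv.comp S = 1) :
    ∀ x : H,
      (1 / r₂) * ‖x‖ ^ 2 ≤ ∑' i, ‖(T i).comp Sinv x‖ ^ 2 ∧
        ∑' i, ‖(T i).comp Sinv x‖ ^ 2 ≤ (1 / r₁) * ‖x‖ ^ 2 := by
  -- key : the frame operator identity ⟪b, S a⟫ = ∑ ⟪T i b, T i a⟫
  have key : ∀ a b : H, HasSum (fun i => (⟪T i b, T i a⟫)) ⟪b, S a⟫ := by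
    intro a b
    have h := (hS a).mapL (innerSL ℂ b)
    simpa [ContinuousLinearMap.adjoint_inner_right] using h
  -- norm-square version
  have hnorm : ∀ a : H, HasSum (fun i => ‖T i a‖ ^ 2) (⟪a, S a⟫).re := by
    intro a
    have h := (key a a).mapL Complex.reCLM
    simpa [← RCLike.re_to_complex, inner_self_eq_norm_sq, -inner_self_eq_norm_sq_to_K] using h
  have htsum : ∀ a : H, ∑' i, ‖T i a‖ ^ 2 = (⟪a, S a⟫).re := fun a => (hnorm a).tsum_eq
  -- frame bounds in terms of the frame operator
  have hb : ∀ a : H, r₁ * ‖a‖ ^ 2 ≤ (⟪a, S a⟫).re ∧ (⟪a, S a⟫).re ≤ r₂ * ‖a‖ ^ 2 := by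
    intro a
    have := hframe a
    rwa [htsum a] at this
  -- positivity of the quadratic form
  have hpos : ∀ a : H, 0 ≤ (⟪a, S a⟫).re := by
    intro a
    rw [← htsum a]
    exact tsum_nonneg fun i => sq_nonneg _
  -- "self-adjointness" in conjugate form
  have hconj : ∀ a b : H, ⟪b, S a⟫ = (starRingEnd ℂ) ⟪a, S b⟫ := by
    intro a b
    have h1 := (key b a).star
    simp only [← inner_conj_symm (T _ a)] at h1
    exact (key a b).unique (by simpa using h1)
  intro x
  set y := Sinv x with hy
  have hx : S y = x := by
    have := congrArg (fun (A : H →L[ℂ] H) => A x) hSinv₁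
    simpa using this
  -- the goal's tsum
  have hgoal : ∑' i, ‖(T i).comp Sinv x‖ ^ 2 = (⟪y, S y⟫).re := by
    simpa using htsum y
  set Q : ℝ := (⟪y, S y⟫).re with hQ
  have hQ1 : r₁ * ‖y‖ ^ 2 ≤ Q := (hb y).1
  have hQ0 : 0 ≤ Q := hpos y
  have hQx : Q = (⟪y, x⟫).re := by rw [hQ, hx]
  -- upper bound
  have hupper : Q ≤ (1 / r₁) * ‖x‖ ^ 2 := by
    have hcs : Q ≤ ‖y‖ * ‖x‖ := by
      rw [hQx, ← RCLike.re_to_complex]; exact re_inner_le_norm y x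
    rw [one_div, inv_mul_eq_div, le_div_iff₀ hr₁]
    nlinarith [sq_nonneg (r₁ * ‖y‖ - ‖x‖), hQ1, hcs, hr₁, sq_nonneg ‖y‖]
  -- lower bound
  have hlower : (1 / r₂) * ‖x‖ ^ 2 ≤ Q := by
    by_cases hx0 : x = 0
    · simp [hx0, hQ0]
    have hxn : 0 < ‖x‖ := norm_pos_iff.mpr hx0
    set a : ℝ := ‖x‖ ^ 2 with ha
    have ha0 : 0 < a := by positivity
    set C : ℝ := (⟪x, S x⟫).re with hC
    have hC1 : r₁ * a ≤ C := (hb x).1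
    have hC2 : C ≤ r₂ * a := (hb x).2
    have hC0 : 0 < C := lt_of_lt_of_le (by positivity) hC1
    have hr₂ : 0 < r₂ := lt_of_lt_of_le hr₁ hr₁₂
    -- re ⟪y, S x⟫ = ‖x‖^2
    have hySx : (⟪y, S x⟫).re = a := by
      rw [hconj x y, hx, Complex.conj_re, ← RCLike.re_to_complex, inner_self_eq_norm_sq]
    have hxx : (⟪x, x⟫).re = a := by rw [← RCLike.re_to_complex]; exact inner_self_eq_norm_sq x
    -- quadratic positivity
    have quad : ∀ t : ℝ, 0 ≤ Q + 2 * t * a + t ^ 2 * C := by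
      intro t
      have h0 := hpos (y + (t : ℂ) • x)
      have hexp : ⟪y + (t : ℂ) • x, S (y + (t : ℂ) • x)⟫ =
          ⟪y, S y⟫ + (t : ℂ) * ⟪y, S x⟫ + (t : ℂ) * ⟪x, S y⟫
            + (t : ℂ) * (t : ℂ) * ⟪x, S x⟫ := by
        rw [map_add, map_smul]
        simp only [inner_add_left, inner_add_right, inner_smul_left, inner_smul_right,
          Complex.conj_ofReal]
        ring
      rw [hexp] at h0
      have hxSy : (⟪x, S y⟫).re = a := by rw [hx, hxx]
      simp only [Complex.add_re, Complex.mul_re, Complex.mul_im, Complex.ofReal_re,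
        Complex.ofReal_im, zero_mul, mul_zero, sub_zero, zero_sub, neg_zero, add_zero,
        zero_add] at h0
      rw [hySx, hxSy] at h0
      nlinarith [h0]
    have hq := quad (-(a / C))
    have hkey : a * a ≤ Q * C := by
      have h2 : (-(a / C)) ^ 2 * C = a * a / C := by
        field_simp
      have h1 : 2 * (-(a / C)) * a = -(2 * (a * a / C)) := by ring
      rw [h2, h1] at hq
      have h3 : a * a / C ≤ Q := by linarith
      rw [div_le_iff₀ hC0] at h3
      linarith
    rw [one_div, inv_mul_eq_div, div_le_iff₀ hr₂]
    nlinarith [hkey, mul_le_mul_of_nonneg_left hC2 hQ0, ha0, hQ0]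
  exact ⟨by rw [hgoal]; exact hlower, by rw [hgoal]; exact hupper⟩
end

section
/- Let H be a complex Hilbert space, (Hᵢ)_{i∈ℕ} a sequence of complex Hilbert spaces, and (Tᵢ : H → Hᵢ)_{i∈ℕ} a frame of operators for H with bounds r₁, r₂, with invertible frame operator S. Then the frame operator of the dual frame of operators (Uᵢ = Tᵢ ∘ S⁻¹)_{i∈ℕ} is S⁻¹: for every x ∈ H, Σ_{i∈ℕ} Uᵢ†(Uᵢ x) = S⁻¹ x. -/
open scoped ComplexInnerProductSpace

/-- The frame operator of the dual frame of operators `(Uᵢ = Tᵢ ∘ S⁻¹)` is `S⁻¹`: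
for every `x`, `Σᵢ Uᵢ†(Uᵢ x) = S⁻¹ x`. -/
theorem dual_frame_operator_eq_inv
    {H : Type*} [NormedAddCommGroup H] [InnerProductSpace ℂ H] [CompleteSpace H]
    (G : ℕ → Type*) [∀ i, NormedAddCommGroup (G i)] [∀ i, InnerProductSpace ℂ (G i)]
    [∀ i, CompleteSpace (G i)]
    (T : ∀ i, H →L[ℂ] G i)
    (r₁ r₂ : ℝ) (hr₁ : 0 < r₁) (hr₁₂ : r₁ ≤ r₂)
    (hframe : ∀ x : H,
        r₁ * ‖x‖ ^ 2 ≤ ∑' i, ‖T i x‖ ^ 2 ∧ ∑' i, ‖T i x‖ ^ 2 ≤ r₂ * ‖x‖ ^ 2)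
    (S Sinv : H →L[ℂ] H)
    (hS : ∀ x : H, HasSum (fun i => ContinuousLinearMap.adjoint (T i) (T i x)) (S x))
    (hSinv₁ : S.comp Sinv = 1) (hSinv₂ : Sinv.comp S = 1) :
    ∀ x : H,
      HasSum
        (fun i =>
          ContinuousLinearMap.adjoint ((T i).comp Sinv) ((T i).comp Sinv x))
        (Sinv x) := by
  -- S is self-adjoint
  have hSsa : ContinuousLinearMap.adjoint S = S := by
    ext x
    refine ext_inner_left ℂ fun y => ?_
    rw [ContinuousLinearMap.adjoint_inner_right]
    have h1 : HasSum (fun i => ⟪y, ContinuousLinearMap.adjoint (T i) (T i x)⟫)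
        ⟪y, S x⟫ := (hS x).mapL (innerSL ℂ y)
    have h3 : HasSum (fun i => ⟪x, ContinuousLinearMap.adjoint (T i) (T i y)⟫)
        ⟪x, S y⟫ := (hS y).mapL (innerSL ℂ x)
    have e : ⟪y, S x⟫ = ⟪S y, x⟫ := by
      have h3' : HasSum (fun i => (starRingEnd ℂ) ⟪x, ContinuousLinearMap.adjoint (T i) (T i y)⟫)
          ((starRingEnd ℂ) ⟪x, S y⟫) := h3.map (starRingEnd ℂ) continuous_star
      have e1 : (fun i => ⟪y, ContinuousLinearMap.adjoint (T i) (T i x)⟫)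
          = fun i => (starRingEnd ℂ) ⟪x, ContinuousLinearMap.adjoint (T i) (T i y)⟫ := by
        funext i
        rw [ContinuousLinearMap.adjoint_inner_right, ContinuousLinearMap.adjoint_inner_right,
          ← inner_conj_symm]
      rw [e1] at h1
      have := h1.unique h3'
      rw [this, ← inner_conj_symm]
      simp
    rw [e]
  intro x
  -- Sinv is self-adjoint
  have hSinvsa : ContinuousLinearMap.adjoint Sinv = Sinv := by
    have h1 : (ContinuousLinearMap.adjoint Sinv).comp S = 1 := by
      have := congrArg ContinuousLinearMap.adjoint hSinv₁
      rw [ContinuousLinearMap.adjoint_comp, hSsa] at this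
      rw [this]
      rw [ContinuousLinearMap.one_def, ContinuousLinearMap.adjoint_id]
    calc ContinuousLinearMap.adjoint Sinv
        = ((ContinuousLinearMap.adjoint Sinv).comp S).comp Sinv := by
          rw [ContinuousLinearMap.comp_assoc, hSinv₁, ContinuousLinearMap.one_def,
            ContinuousLinearMap.comp_id]
      _ = Sinv := by rw [h1, ContinuousLinearMap.one_def, ContinuousLinearMap.id_comp]
  have key : HasSum (fun i => Sinv (ContinuousLinearMap.adjoint (T i) (T i (Sinv x))))
      (Sinv (S (Sinv x))) := (hS (Sinv x)).mapL Sinv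
  have hx : Sinv (S (Sinv x)) = Sinv x := by
    have := congrArg (fun f : H →L[ℂ] H => f (Sinv x)) hSinv₂
    simpa using this
  rw [hx] at key
  convert key using 2 with i
  rw [ContinuousLinearMap.adjoint_comp, hSinvsa]
  rfl
end

section
/- Let H be a complex Hilbert space, (Hᵢ)_{i∈ℕ} a sequence of complex Hilbert spaces, and (Tᵢ : H → Hᵢ)_{i∈ℕ} a frame of operators for H with bounds r₁, r₂, with frame operator S. Let R : H → H be a bounded self-adjoint operator such that R ∘ S ∘ R = I (for instance R = S^{-1/2}, the positive square root of S⁻¹). Then the operators Tᵢ ∘ R form a Parseval frame of operators for H: Σ_{i∈ℕ} ‖(Tᵢ ∘ R)(x)‖² = ‖x‖² for all x ∈ H. -/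
open scoped ComplexInnerProductSpace

/-- If `(Tᵢ)` is a frame of operators with frame operator `S`, and `R` is a bounded self-adjoint
operator with `R ∘ S ∘ R = I` (e.g. `R = S^{-1/2}`), then `(Tᵢ ∘ R)` is a Parseval frame of
operators: `Σᵢ ‖Tᵢ(R x)‖² = ‖x‖²` for all `x`. -/
theorem parseval_frame_of_operators
    {H : Type*} [NormedAddCommGroup H] [InnerProductSpace ℂ H] [CompleteSpace H]
    (G : ℕ → Type*) [∀ i, NormedAddCommGroup (G i)] [∀ i, InnerProductSpace ℂ (G i)]
    [∀ i, CompleteSpace (G i)]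
    (T : ∀ i, H →L[ℂ] G i)
    (r₁ r₂ : ℝ) (hr₁ : 0 < r₁) (hr₁₂ : r₁ ≤ r₂)
    (hframe : ∀ x : H,
        r₁ * ‖x‖ ^ 2 ≤ ∑' i, ‖T i x‖ ^ 2 ∧ ∑' i, ‖T i x‖ ^ 2 ≤ r₂ * ‖x‖ ^ 2)
    (S : H →L[ℂ] H)
    (hS : ∀ x : H, HasSum (fun i => ContinuousLinearMap.adjoint (T i) (T i x)) (S x))
    (R : H →L[ℂ] H) (hR : IsSelfAdjoint R) (hRSR : ∀ x : H, R (S (R x)) = x) :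
    ∀ x : H, HasSum (fun i => ‖(T i).comp R x‖ ^ 2) (‖x‖ ^ 2) := by
  intro x
  have h1 : HasSum (fun i => (⟪ContinuousLinearMap.adjoint (T i) (T i (R x)), R x⟫ : ℂ))
      ⟪S (R x), R x⟫ := ((innerSL ℂ).flip (R x)).hasSum (hS (R x))
  have h2 : (⟪S (R x), R x⟫ : ℂ) = (‖x‖ ^ 2 : ℝ) := by
    have : (⟪S (R x), R x⟫ : ℂ) = ⟪R (S (R x)), x⟫ := by
      rw [← ContinuousLinearMap.adjoint_inner_left, hR.adjoint_eq]
    rw [this, hRSR, inner_self_eq_norm_sq_to_K]; norm_cast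
  have h3 : ∀ i, (⟪ContinuousLinearMap.adjoint (T i) (T i (R x)), R x⟫ : ℂ)
      = (‖(T i).comp R x‖ ^ 2 : ℝ) := by
    intro i
    rw [ContinuousLinearMap.adjoint_inner_left, inner_self_eq_norm_sq_to_K]
    norm_cast
  rw [h2] at h1
  simp only [h3] at h1
  exact_mod_cast Complex.hasSum_ofReal.mp h1
end

section
/- Let H be a complex Hilbert space, (Hᵢ)_{i∈ℕ} a sequence of complex Hilbert spaces, and (Tᵢ : H → Hᵢ)_{i∈ℕ} a sequence of bounded linear operators. Suppose there exist constants 0 < r₁ ≤ r₂ < ∞ and a dense subset V of H such that r₁‖x‖² ≤ Σ_{i∈ℕ} ‖Tᵢ x‖² ≤ r₂‖x‖² for all x ∈ V. Then (Tᵢ) is a frame of operators for H with bounds r₁ and r₂, i.e. the inequalities hold for every x ∈ H. -/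
open scoped ComplexInnerProductSpace ENNReal

/-- If the frame inequalities hold on a dense subset `V` of `H`, then `(Tᵢ)` is a frame of
operators for all of `H` with the same bounds. -/
theorem frame_of_operators_of_dense
    {H : Type*} [NormedAddCommGroup H] [InnerProductSpace ℂ H] [CompleteSpace H]
    (G : ℕ → Type*) [∀ i, NormedAddCommGroup (G i)] [∀ i, InnerProductSpace ℂ (G i)]
    [∀ i, CompleteSpace (G i)]
    (T : ∀ i, H →L[ℂ] G i)
    (r₁ r₂ : ℝ) (hr₁ : 0 < r₁) (hr₁₂ : r₁ ≤ r₂)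
    (V : Set H) (hV : Dense V)
    (hframe : ∀ x ∈ V,
        r₁ * ‖x‖ ^ 2 ≤ ∑' i, ‖T i x‖ ^ 2 ∧ ∑' i, ‖T i x‖ ^ 2 ≤ r₂ * ‖x‖ ^ 2) :
    ∀ x : H,
      r₁ * ‖x‖ ^ 2 ≤ ∑' i, ‖T i x‖ ^ 2 ∧ ∑' i, ‖T i x‖ ^ 2 ≤ r₂ * ‖x‖ ^ 2 := by
  have hnn : ∀ (x : H) (i : ℕ), (0 : ℝ) ≤ ‖T i x‖ ^ 2 := fun x i => by positivity
  -- summability on V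
  have hsumV : ∀ x ∈ V, Summable fun i => ‖T i x‖ ^ 2 := by
    intro x hx
    by_cases hx0 : x = 0
    · subst hx0; simpa using summable_zero
    · by_contra h
      have h0 := (hframe x hx).1
      rw [tsum_eq_zero_of_not_summable h] at h0
      have hxn : ‖x‖ ≠ 0 := norm_ne_zero_iff.2 hx0
      have : 0 < r₁ * ‖x‖ ^ 2 := by positivity
      linarith
  -- finite-sum upper bound everywhere, by density
  have hF : ∀ (s : Finset ℕ) (x : H), ∑ i ∈ s, ‖T i x‖ ^ 2 ≤ r₂ * ‖x‖ ^ 2 := by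
    intro s
    have hc1 : Continuous fun x : H => ∑ i ∈ s, ‖T i x‖ ^ 2 := by
      apply continuous_finset_sum
      intro i _
      exact ((T i).continuous.norm.pow 2)
    have hc2 : Continuous fun x : H => r₂ * ‖x‖ ^ 2 :=
      continuous_const.mul (continuous_norm.pow 2)
    have hsub : closure V ⊆ {x : H | ∑ i ∈ s, ‖T i x‖ ^ 2 ≤ r₂ * ‖x‖ ^ 2} := by
      refine closure_minimal (fun x hx => ?_) (isClosed_le hc1 hc2)
      exact (Summable.sum_le_tsum s (fun i _ => hnn x i) (hsumV x hx)).trans (hframe x hx).2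
    intro x
    exact hsub (hV x)
  -- summability everywhere
  have hsum : ∀ x : H, Summable fun i => ‖T i x‖ ^ 2 := fun x =>
    summable_of_sum_le (fun i => hnn x i) (fun u => hF u x)
  -- upper bound everywhere
  have hupper : ∀ x : H, ∑' i, ‖T i x‖ ^ 2 ≤ r₂ * ‖x‖ ^ 2 := fun x =>
    Summable.tsum_le_of_sum_le (hsum x) (fun u => hF u x)
  -- the analysis map into ℓ²
  have hmem : ∀ x : H, Memℓp (fun i => T i x) 2 := by
    intro x
    apply memℓp_gen
    have : (2 : ℝ≥0∞).toReal = (2 : ℕ) := by simp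
    rw [this]
    simpa [Real.rpow_natCast] using hsum x
  let Φlin : H →ₗ[ℂ] lp G 2 :=
    { toFun := fun x => ⟨fun i => T i x, hmem x⟩
      map_add' := fun x y => by
        ext i
        simp [lp.coeFn_add]
        rfl
      map_smul' := fun c x => by
        ext i
        simp [lp.coeFn_smul] }
  have hΦtsum : ∀ x : H, ∑' i, ‖T i x‖ ^ 2 = ‖Φlin x‖ ^ 2 := by
    intro x
    have h2 : (0:ℝ) < (2 : ℝ≥0∞).toReal := by simp
    have := lp.norm_rpow_eq_tsum h2 (Φlin x)
    have h2' : (2 : ℝ≥0∞).toReal = ((2 : ℕ) : ℝ) := by simp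
    rw [h2'] at this
    simp only [Real.rpow_natCast] at this
    rw [this]
    rfl
  have hΦbound : ∀ x : H, ‖Φlin x‖ ≤ Real.sqrt r₂ * ‖x‖ := by
    intro x
    have h1 : ‖Φlin x‖ ^ 2 ≤ (Real.sqrt r₂ * ‖x‖) ^ 2 := by
      rw [← hΦtsum x, mul_pow, Real.sq_sqrt (le_of_lt (hr₁.trans_le hr₁₂))]
      exact hupper x
    calc ‖Φlin x‖ = Real.sqrt (‖Φlin x‖ ^ 2) := (Real.sqrt_sq (norm_nonneg _)).symm
      _ ≤ Real.sqrt ((Real.sqrt r₂ * ‖x‖) ^ 2) := Real.sqrt_le_sqrt h1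
      _ = Real.sqrt r₂ * ‖x‖ := Real.sqrt_sq (by positivity)
  have hΦcont : Continuous fun x : H => ‖Φlin x‖ ^ 2 := by
    have : Continuous fun x : H => Φlin x :=
      (Φlin.mkContinuous (Real.sqrt r₂) hΦbound).continuous
    exact (this.norm.pow 2)
  -- lower bound everywhere by density
  have hlower : ∀ x : H, r₁ * ‖x‖ ^ 2 ≤ ∑' i, ‖T i x‖ ^ 2 := by
    intro x
    have hc2 : Continuous fun x : H => r₁ * ‖x‖ ^ 2 :=
      continuous_const.mul (continuous_norm.pow 2)
    have hsub : closure V ⊆ {x : H | r₁ * ‖x‖ ^ 2 ≤ ‖Φlin x‖ ^ 2} := by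
      refine closure_minimal (fun y hy => ?_) (isClosed_le hc2 hΦcont)
      exact (hframe y hy).1.trans_eq (hΦtsum y)
    rw [hΦtsum x]
    exact hsub (hV x)
  exact fun x => ⟨hlower x, hupper x⟩
end

section
/- Let H be a complex Hilbert space, (Hᵢ)_{i∈ℕ} a sequence of complex Hilbert spaces, (Tᵢ : H → Hᵢ)_{i∈ℕ} a frame of operators for H with bounds r₁, r₂, and (Rᵢ : H → Hᵢ)_{i∈ℕ} a sequence of bounded linear operators such that Σ_{i∈ℕ} ‖Rᵢ x‖² < ∞ for every x ∈ H. Suppose there exist constants λ₁, λ₂, μ ≥ 0 with λ₂ < 1 and λ₁ + λ₂ + μ/√r₁ < 1 such that for all x ∈ H, (Σ_{i∈ℕ} ‖(Tᵢ − Rᵢ)x‖²)^{1/2} ≤ λ₁(Σ_{i∈ℕ} ‖Tᵢ x‖²)^{1/2} + λ₂(Σ_{i∈ℕ} ‖Rᵢ x‖²)^{1/2} + μ‖x‖. Then (Rᵢ) is a frame of operators for H with bounds r₁(1 − (λ₁ + λ₂ + μ/√r₁)/(1 + λ₂))² and r₂(1 + (λ₁ + λ₂ + μ/√r₁)/(1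 − λ₂))². -/
open scoped ComplexInnerProductSpace ENNReal

lemma sqrt_tsum_norm_eq {G : ℕ → Type*} [∀ i, NormedAddCommGroup (G i)]
    (f : ∀ i, G i) (hf : Memℓp f 2) :
    Real.sqrt (∑' i, ‖f i‖ ^ 2) = ‖(⟨f, hf⟩ : lp G 2)‖ := by
  have hp : (0:ℝ) < (2 : ℝ≥0∞).toReal := by norm_num
  rw [lp.norm_eq_tsum_rpow hp]
  have : ∀ i, ‖f i‖ ^ ((2:ℝ≥0∞).toReal) = ‖f i‖ ^ 2 := by
    intro i
    rw [show ((2:ℝ≥0∞).toReal) = ((2:ℕ):ℝ) by norm_num, Real.rpow_natCast]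
  simp only [this]
  rw [Real.sqrt_eq_rpow]
  norm_num

lemma memℓp_two' {G : ℕ → Type*} [∀ i, NormedAddCommGroup (G i)]
    (f : ∀ i, G i) (hf : Summable fun i => ‖f i‖ ^ 2) : Memℓp f 2 := by
  apply memℓp_gen
  convert hf using 2 with i
  rw [show ((2:ℝ≥0∞).toReal) = ((2:ℕ):ℝ) by norm_num, Real.rpow_natCast]

lemma sqrt_tsum_sub_le {G : ℕ → Type*} [∀ i, NormedAddCommGroup (G i)]
    (f g : ∀ i, G i) (hf : Memℓp f 2) (hg : Memℓp g 2) :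
    Real.sqrt (∑' i, ‖f i - g i‖ ^ 2) ≤
      Real.sqrt (∑' i, ‖f i‖ ^ 2) + Real.sqrt (∑' i, ‖g i‖ ^ 2) := by
  have h := sqrt_tsum_norm_eq (f - g) (hf.sub hg)
  simp only [Pi.sub_apply] at h
  rw [sqrt_tsum_norm_eq f hf, sqrt_tsum_norm_eq g hg, h]
  exact norm_sub_le (⟨f, hf⟩ : lp G 2) ⟨g, hg⟩

/-- Stability of frames of operators: a perturbation `(Rᵢ)` of a frame of operators `(Tᵢ)`
satisfying the Paley–Wiener type condition is again a frame of operators, with the indicated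
bounds. -/
theorem stability_of_frame_of_operators
    {H : Type*} [NormedAddCommGroup H] [InnerProductSpace ℂ H] [CompleteSpace H]
    (G : ℕ → Type*) [∀ i, NormedAddCommGroup (G i)] [∀ i, InnerProductSpace ℂ (G i)]
    [∀ i, CompleteSpace (G i)]
    (T R : ∀ i, H →L[ℂ] G i)
    (r₁ r₂ : ℝ) (hr₁ : 0 < r₁) (hr₁₂ : r₁ ≤ r₂)
    (hframe : ∀ x : H,
        r₁ * ‖x‖ ^ 2 ≤ ∑' i, ‖T i x‖ ^ 2 ∧ ∑' i, ‖T i x‖ ^ 2 ≤ r₂ * ‖x‖ ^ 2)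
    (hRsummable : ∀ x : H, Summable fun i => ‖R i x‖ ^ 2)
    (l₁ l₂ μ : ℝ) (hl₁ : 0 ≤ l₁) (hl₂ : 0 ≤ l₂) (hμ : 0 ≤ μ)
    (hl₂lt : l₂ < 1) (hsmall : l₁ + l₂ + μ / Real.sqrt r₁ < 1)
    (hpert : ∀ x : H,
        Real.sqrt (∑' i, ‖(T i - R i) x‖ ^ 2) ≤
          l₁ * Real.sqrt (∑' i, ‖T i x‖ ^ 2) + l₂ * Real.sqrt (∑' i, ‖R i x‖ ^ 2) +
            μ * ‖x‖) :
    ∀ x : H,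
      r₁ * (1 - (l₁ + l₂ + μ / Real.sqrt r₁) / (1 + l₂)) ^ 2 * ‖x‖ ^ 2 ≤
          ∑' i, ‖R i x‖ ^ 2 ∧
        ∑' i, ‖R i x‖ ^ 2 ≤
          r₂ * (1 + (l₁ + l₂ + μ / Real.sqrt r₁) / (1 - l₂)) ^ 2 * ‖x‖ ^ 2 := by
  -- summability of the T-sums
  have hTsum : ∀ x : H, Summable fun i => ‖T i x‖ ^ 2 := by
    intro x
    by_contra h
    have h0 : ∑' i, ‖T i x‖ ^ 2 = 0 := tsum_eq_zero_of_not_summable h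
    have h1 := (hframe x).1
    rw [h0] at h1
    have hx : x = 0 := by
      have hx2 : ‖x‖ ^ 2 = 0 := le_antisymm (by nlinarith) (sq_nonneg _)
      have := pow_eq_zero_iff (n := 2) (by norm_num) |>.mp hx2
      exact norm_eq_zero.mp this
    subst hx
    apply h
    have : (fun i => ‖T i (0:H)‖ ^ 2) = fun _ => (0:ℝ) := by funext i; simp
    rw [this]
    exact summable_zero
  have hr₂ : (0:ℝ) < r₂ := lt_of_lt_of_le hr₁ hr₁₂
  have hsr₁ : (0:ℝ) < Real.sqrt r₁ := Real.sqrt_pos.mpr hr₁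
  set s : ℝ := μ / Real.sqrt r₁ with hs_def
  have hs : 0 ≤ s := div_nonneg hμ hsr₁.le
  have hsmul : s * Real.sqrt r₁ = μ := div_mul_cancel₀ μ hsr₁.ne'
  intro x
  set a : ℝ := Real.sqrt (∑' i, ‖T i x‖ ^ 2) with ha_def
  set b : ℝ := Real.sqrt (∑' i, ‖R i x‖ ^ 2) with hb_def
  set c : ℝ := Real.sqrt (∑' i, ‖(T i - R i) x‖ ^ 2) with hc_def
  have ha0 : 0 ≤ a := Real.sqrt_nonneg _
  have hb0 : 0 ≤ b := Real.sqrt_nonneg _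
  have hc0 : 0 ≤ c := Real.sqrt_nonneg _
  have haT : ∑' i, ‖T i x‖ ^ 2 = a ^ 2 :=
    (Real.sq_sqrt (tsum_nonneg fun i => sq_nonneg _)).symm
  have hbR : ∑' i, ‖R i x‖ ^ 2 = b ^ 2 :=
    (Real.sq_sqrt (tsum_nonneg fun i => sq_nonneg _)).symm
  -- memℓp facts
  have hfT : Memℓp (fun i => T i x) 2 := memℓp_two' _ (hTsum x)
  have hfR : Memℓp (fun i => R i x) 2 := memℓp_two' _ (hRsummable x)
  have hfD : Memℓp (fun i => T i x - R i x) 2 := hfT.sub hfR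
  have hDrw : (∑' i, ‖(T i - R i) x‖ ^ 2) = ∑' i, ‖T i x - R i x‖ ^ 2 := by
    simp [ContinuousLinearMap.sub_apply]
  -- triangle inequalities
  have htri1 : b ≤ a + c := by
    have h := sqrt_tsum_sub_le (fun i => T i x) (fun i => T i x - R i x) hfT hfD
    simp only [sub_sub_cancel] at h
    rw [hb_def, ha_def, hc_def, hDrw]
    exact h
  have htri2 : a ≤ b + c := by
    have h := sqrt_tsum_sub_le (fun i => R i x) (fun i => R i x - T i x) hfR (hfR.sub hfT)
    simp only [sub_sub_cancel] at h
    have hsw : (∑' i, ‖R i x - T i x‖ ^ 2) = ∑' i, ‖T i x - R i x‖ ^ 2 := by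
      congr 1; funext i; rw [← norm_neg, neg_sub]
    rw [ha_def, hb_def, hc_def, hDrw]
    rw [hsw] at h
    exact h
  -- frame bounds for a
  have ha_low : Real.sqrt r₁ * ‖x‖ ≤ a := by
    have := (hframe x).1
    have h := Real.sqrt_le_sqrt this
    rwa [Real.sqrt_mul hr₁.le, Real.sqrt_sq (norm_nonneg _)] at h
  have ha_up : a ≤ Real.sqrt r₂ * ‖x‖ := by
    have := (hframe x).2
    have h := Real.sqrt_le_sqrt this
    rwa [Real.sqrt_mul hr₂.le, Real.sqrt_sq (norm_nonneg _)] at h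
  have hμx : μ * ‖x‖ ≤ s * a := by
    calc μ * ‖x‖ = s * (Real.sqrt r₁ * ‖x‖) := by rw [← hsmul]; ring
    _ ≤ s * a := by nlinarith
  have hc_le : c ≤ l₁ * a + l₂ * b + μ * ‖x‖ := hpert x
  -- upper bound
  have h12 : (0:ℝ) < 1 - l₂ := by linarith
  have hKey_up : (1 - l₂) * b ≤ (1 + l₁ + s) * a := by linarith
  have hb_up : b ≤ Real.sqrt r₂ * (1 + (l₁ + l₂ + s) / (1 - l₂)) * ‖x‖ := by
    have hK : (1 + (l₁ + l₂ + s) / (1 - l₂)) = (1 + l₁ + s) / (1 - l₂) := by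
      field_simp; ring
    rw [hK]
    rw [show Real.sqrt r₂ * ((1 + l₁ + s) / (1 - l₂)) * ‖x‖
        = ((1 + l₁ + s) * (Real.sqrt r₂ * ‖x‖)) / (1 - l₂) by ring]
    rw [le_div_iff₀ h12]
    have h1 : (1 + l₁ + s) * a ≤ (1 + l₁ + s) * (Real.sqrt r₂ * ‖x‖) :=
      mul_le_mul_of_nonneg_left ha_up (by linarith)
    linarith
  -- lower bound
  have h1ls : l₂ ≤ 1 - l₁ - s := by linarith
  have hKey_low : (1 - l₁ - s) * a ≤ (1 + l₂) * b := by linarith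
  have hb_low : Real.sqrt r₁ * (1 - (l₁ + l₂ + s) / (1 + l₂)) * ‖x‖ ≤ b := by
    have h12' : (0:ℝ) < 1 + l₂ := by linarith
    have hK : (1 - (l₁ + l₂ + s) / (1 + l₂)) = (1 - l₁ - s) / (1 + l₂) := by
      field_simp; ring
    rw [hK]
    rw [show Real.sqrt r₁ * ((1 - l₁ - s) / (1 + l₂)) * ‖x‖
        = ((1 - l₁ - s) * (Real.sqrt r₁ * ‖x‖)) / (1 + l₂) by ring]
    rw [div_le_iff₀ h12']
    have h1 : (1 - l₁ - s) * (Real.sqrt r₁ * ‖x‖) ≤ (1 - l₁ - s) * a :=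
      mul_le_mul_of_nonneg_left ha_low (by linarith)
    linarith
  constructor
  · have hL0 : 0 ≤ Real.sqrt r₁ * (1 - (l₁ + l₂ + s) / (1 + l₂)) * ‖x‖ := by
      have h12' : (0:ℝ) < 1 + l₂ := by linarith
      have : 0 ≤ 1 - (l₁ + l₂ + s) / (1 + l₂) := by
        rw [sub_nonneg, div_le_one h12']; linarith
      positivity
    have := pow_le_pow_left₀ hL0 hb_low 2
    rw [hbR]
    calc r₁ * (1 - (l₁ + l₂ + s) / (1 + l₂)) ^ 2 * ‖x‖ ^ 2
        = (Real.sqrt r₁ * (1 - (l₁ + l₂ + s) / (1 + l₂)) * ‖x‖) ^ 2 := by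
          rw [mul_pow, mul_pow, Real.sq_sqrt hr₁.le]
      _ ≤ b ^ 2 := this
  · have := pow_le_pow_left₀ hb0 hb_up 2
    rw [hbR]
    calc b ^ 2 ≤ (Real.sqrt r₂ * (1 + (l₁ + l₂ + s) / (1 - l₂)) * ‖x‖) ^ 2 := this
      _ = r₂ * (1 + (l₁ + l₂ + s) / (1 - l₂)) ^ 2 * ‖x‖ ^ 2 := by
          rw [mul_pow, mul_pow, Real.sq_sqrt hr₂.le]
end

section
/- Let H be a complex Hilbert space, (Hᵢ)_{i∈ℕ} a sequence of complex Hilbert spaces, (Tᵢ : H → Hᵢ)_{i∈ℕ} a frame of operators for H with bounds r₁, r₂, and (Rᵢ : H → Hᵢ)_{i∈ℕ} a sequence of bounded linear operators. Suppose there exist constants λ, μ ≥ 0 with λ + μ/√r₁ < 1 such that for every finitely supported family (xᵢ)_{i∈ℕ} with xᵢ ∈ Hᵢ, ‖Σ_{i∈ℕ} (Tᵢ† − Rᵢ†)(xᵢ)‖ ≤ λ‖Σ_{i∈ℕ} Tᵢ†(xᵢ)‖ + μ(Σ_{i∈ℕ} ‖xᵢ‖²)^{1/2}. Then (Rᵢ)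 is a frame of operators for H with bounds r₁(1 − (λ + μ/√r₁))² and r₂(1 + (λ + μ/√r₂))². -/
open scoped ComplexInnerProductSpace

private lemma cs_sum (F : Finset ℕ) (f g : ℕ → ℝ) :
    ∑ i ∈ F, f i * g i ≤
      Real.sqrt (∑ i ∈ F, f i ^ 2) * Real.sqrt (∑ i ∈ F, g i ^ 2) := by
  have h := Finset.sum_mul_sq_le_sq_mul_sq F f g
  calc ∑ i ∈ F, f i * g i ≤ |∑ i ∈ F, f i * g i| := le_abs_self _
    _ = Real.sqrt ((∑ i ∈ F, f i * g i) ^ 2) := (Real.sqrt_sq_eq_abs _).symm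
    _ ≤ Real.sqrt ((∑ i ∈ F, f i ^ 2) * ∑ i ∈ F, g i ^ 2) := Real.sqrt_le_sqrt h
    _ = _ := Real.sqrt_mul (Finset.sum_nonneg fun i _ => sq_nonneg _) _

set_option maxHeartbeats 2000000 in
/-- Stability of frames of operators in terms of the adjoint (synthesis) operators: if
`‖Σᵢ (Tᵢ† - Rᵢ†)(xᵢ)‖ ≤ λ‖Σᵢ Tᵢ†(xᵢ)‖ + μ(Σᵢ ‖xᵢ‖²)^{1/2}` for every finitely supported
family `(xᵢ)`, then `(Rᵢ)` is a frame of operators with the indicated bounds. -/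
theorem stability_of_frame_of_operators_adjoint
    {H : Type*} [NormedAddCommGroup H] [InnerProductSpace ℂ H] [CompleteSpace H]
    (G : ℕ → Type*) [∀ i, NormedAddCommGroup (G i)] [∀ i, InnerProductSpace ℂ (G i)]
    [∀ i, CompleteSpace (G i)]
    (T R : ∀ i, H →L[ℂ] G i)
    (r₁ r₂ : ℝ) (hr₁ : 0 < r₁) (hr₁₂ : r₁ ≤ r₂)
    (hframe : ∀ x : H,
        r₁ * ‖x‖ ^ 2 ≤ ∑' i, ‖T i x‖ ^ 2 ∧ ∑' i, ‖T i x‖ ^ 2 ≤ r₂ * ‖x‖ ^ 2)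
    (l μ : ℝ) (hl : 0 ≤ l) (hμ : 0 ≤ μ) (hsmall : l + μ / Real.sqrt r₁ < 1)
    (hpert : ∀ (F : Finset ℕ) (x : ∀ i, G i),
        ‖∑ i ∈ F,
            (ContinuousLinearMap.adjoint (T i) (x i) -
              ContinuousLinearMap.adjoint (R i) (x i))‖ ≤
          l * ‖∑ i ∈ F, ContinuousLinearMap.adjoint (T i) (x i)‖ +
            μ * Real.sqrt (∑ i ∈ F, ‖x i‖ ^ 2)) :
    ∀ x : H,
      r₁ * (1 - (l + μ / Real.sqrt r₁)) ^ 2 * ‖x‖ ^ 2 ≤ ∑' i, ‖R i x‖ ^ 2 ∧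
        ∑' i, ‖R i x‖ ^ 2 ≤ r₂ * (1 + (l + μ / Real.sqrt r₂)) ^ 2 * ‖x‖ ^ 2 := by
  have hr₂ : (0:ℝ) < r₂ := lt_of_lt_of_le hr₁ hr₁₂
  have hs₁ : (0:ℝ) < Real.sqrt r₁ := Real.sqrt_pos.mpr hr₁
  have hs₂ : (0:ℝ) < Real.sqrt r₂ := Real.sqrt_pos.mpr hr₂
  have hs₂sq : Real.sqrt r₂ ^ 2 = r₂ := Real.sq_sqrt hr₂.le
  have hs₁sq : Real.sqrt r₁ ^ 2 = r₁ := Real.sq_sqrt hr₁.le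
  -- summability of the scalar frame series for T
  have hsumT : ∀ x : H, Summable (fun i => ‖T i x‖ ^ 2) := by
    intro x
    by_contra hns
    have h0 := (hframe x).1
    rw [tsum_eq_zero_of_not_summable hns] at h0
    have hx : x = 0 := by
      have hx2 : ‖x‖ ^ 2 ≤ 0 := by nlinarith [sq_nonneg ‖x‖]
      have : ‖x‖ = 0 := by nlinarith [norm_nonneg x]
      simpa using this
    apply hns
    subst hx
    simpa using summable_zero
  -- finite synthesis bound for T
  have hfin : ∀ (F : Finset ℕ) (y : ∀ i, G i),
      ‖∑ i ∈ F, ContinuousLinearMap.adjoint (T i) (y i)‖ ≤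
        Real.sqrt r₂ * Real.sqrt (∑ i ∈ F, ‖y i‖ ^ 2) := by
    intro F y
    set u := ∑ i ∈ F, ContinuousLinearMap.adjoint (T i) (y i) with hu
    rcases eq_or_ne u 0 with h | h
    · rw [h, norm_zero]
      positivity
    have hTu : ∑ i ∈ F, ‖T i u‖ ^ 2 ≤ r₂ * ‖u‖ ^ 2 :=
      le_trans (Summable.sum_le_tsum F (fun i _ => sq_nonneg _) (hsumT u)) (hframe u).2
    have key : ‖u‖ ^ 2 ≤ Real.sqrt r₂ * Real.sqrt (∑ i ∈ F, ‖y i‖ ^ 2) * ‖u‖ := by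
      have h1 : (‖u‖ ^ 2 : ℝ) = RCLike.re (⟪u, u⟫) :=
        (inner_self_eq_norm_sq u).symm
      have h2 : (⟪u, u⟫) = ∑ i ∈ F, ⟪y i, T i u⟫ := by
        rw [hu, sum_inner]
        exact Finset.sum_congr rfl fun i _ => ContinuousLinearMap.adjoint_inner_left _ _ _
      have h3 : RCLike.re (⟪u, u⟫) ≤ ∑ i ∈ F, ‖y i‖ * ‖T i u‖ := by
        rw [h2, map_sum]
        refine Finset.sum_le_sum fun i _ => ?_
        exact le_trans (RCLike.re_le_norm _) (norm_inner_le_norm _ _)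
      have h4 : ∑ i ∈ F, ‖y i‖ * ‖T i u‖ ≤
          Real.sqrt (∑ i ∈ F, ‖y i‖ ^ 2) * Real.sqrt (∑ i ∈ F, ‖T i u‖ ^ 2) :=
        cs_sum F _ _
      have h5 : Real.sqrt (∑ i ∈ F, ‖T i u‖ ^ 2) ≤ Real.sqrt r₂ * ‖u‖ := by
        have he : Real.sqrt (r₂ * ‖u‖ ^ 2) = Real.sqrt r₂ * ‖u‖ := by
          rw [Real.sqrt_mul hr₂.le, Real.sqrt_sq (norm_nonneg _)]
        rw [← he]
        exact Real.sqrt_le_sqrt hTu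
      calc ‖u‖ ^ 2 ≤ ∑ i ∈ F, ‖y i‖ * ‖T i u‖ := h1.le.trans h3
        _ ≤ Real.sqrt (∑ i ∈ F, ‖y i‖ ^ 2) * Real.sqrt (∑ i ∈ F, ‖T i u‖ ^ 2) := h4
        _ ≤ Real.sqrt (∑ i ∈ F, ‖y i‖ ^ 2) * (Real.sqrt r₂ * ‖u‖) := by
            exact mul_le_mul_of_nonneg_left h5 (Real.sqrt_nonneg _)
        _ = Real.sqrt r₂ * Real.sqrt (∑ i ∈ F, ‖y i‖ ^ 2) * ‖u‖ := by ring
    have hun : (0:ℝ) < ‖u‖ := norm_pos_iff.mpr h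
    nlinarith [key, hun]
  -- summability of the frame operator series
  have hSsum : ∀ x : H, Summable (fun i => ContinuousLinearMap.adjoint (T i) (T i x)) := by
    intro x
    rw [summable_iff_vanishing]
    intro e he
    obtain ⟨ε, hε, hball⟩ := Metric.mem_nhds_iff.mp he
    have hδ : (0:ℝ) < (ε / (Real.sqrt r₂ + 1)) ^ 2 := by positivity
    obtain ⟨s, hs⟩ := (summable_iff_vanishing.mp (hsumT x))
      (Metric.ball 0 ((ε / (Real.sqrt r₂ + 1)) ^ 2)) (Metric.ball_mem_nhds 0 hδ)
    refine ⟨s, fun t ht => ?_⟩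
    apply hball
    have h1 := hs t ht
    simp only [Metric.mem_ball, Real.dist_eq, sub_zero] at h1
    rw [Metric.mem_ball, dist_zero_right]
    have h2 : ∑ i ∈ t, ‖T i x‖ ^ 2 < (ε / (Real.sqrt r₂ + 1)) ^ 2 :=
      lt_of_le_of_lt (le_abs_self _) h1
    have h3 : Real.sqrt (∑ i ∈ t, ‖T i x‖ ^ 2) < ε / (Real.sqrt r₂ + 1) := by
      have := Real.sqrt_lt_sqrt (Finset.sum_nonneg fun i _ => sq_nonneg _) h2
      rwa [Real.sqrt_sq (by positivity)] at this
    have h4 := hfin t (fun i => T i x)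
    have h5 : Real.sqrt r₂ * Real.sqrt (∑ i ∈ t, ‖T i x‖ ^ 2) < ε := by
      calc Real.sqrt r₂ * Real.sqrt (∑ i ∈ t, ‖T i x‖ ^ 2)
          ≤ (Real.sqrt r₂ + 1) * Real.sqrt (∑ i ∈ t, ‖T i x‖ ^ 2) := by
            apply mul_le_mul_of_nonneg_right (by linarith) (Real.sqrt_nonneg _)
        _ < (Real.sqrt r₂ + 1) * (ε / (Real.sqrt r₂ + 1)) := by
            apply mul_lt_mul_of_pos_left h3 (by positivity)
        _ = ε := by field_simp
    calc ‖∑ i ∈ t, ContinuousLinearMap.adjoint (T i) (T i x)‖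
        ≤ Real.sqrt r₂ * Real.sqrt (∑ i ∈ t, ‖T i x‖ ^ 2) := h4
      _ < ε := h5
  -- the frame operator
  have hSnorm : ∀ x : H, ‖∑' i, ContinuousLinearMap.adjoint (T i) (T i x)‖ ≤ r₂ * ‖x‖ := by
    intro x
    have h : Filter.Tendsto
        (fun F : Finset ℕ => ‖∑ i ∈ F, ContinuousLinearMap.adjoint (T i) (T i x)‖)
        Filter.atTop (nhds ‖∑' i, ContinuousLinearMap.adjoint (T i) (T i x)‖) :=
      (continuous_norm.tendsto _).comp (hSsum x).hasSum
    refine le_of_tendsto h (Filter.Eventually.of_forall fun F => ?_)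
    calc ‖∑ i ∈ F, ContinuousLinearMap.adjoint (T i) (T i x)‖
        ≤ Real.sqrt r₂ * Real.sqrt (∑ i ∈ F, ‖T i x‖ ^ 2) := hfin F _
      _ ≤ Real.sqrt r₂ * Real.sqrt (r₂ * ‖x‖ ^ 2) := by
          refine mul_le_mul_of_nonneg_left (Real.sqrt_le_sqrt ?_) (Real.sqrt_nonneg _)
          exact le_trans (Summable.sum_le_tsum F (fun i _ => sq_nonneg _) (hsumT x)) (hframe x).2
      _ = r₂ * ‖x‖ := by
          rw [Real.sqrt_mul hr₂.le, Real.sqrt_sq (norm_nonneg _), ← mul_assoc, ← sq, hs₂sq]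
  obtain ⟨S, hSapp⟩ : ∃ S : H →L[ℂ] H,
      ∀ x : H, HasSum (fun i => ContinuousLinearMap.adjoint (T i) (T i x)) (S x) := by
    refine ⟨LinearMap.mkContinuous
      { toFun := fun x => ∑' i, ContinuousLinearMap.adjoint (T i) (T i x)
        map_add' := fun x y => by
          simp only [map_add]
          exact Summable.tsum_add (hSsum x) (hSsum y)
        map_smul' := fun c x => by
          simp only [map_smul, RingHom.id_apply]
          exact ((hSsum x).hasSum.const_smul c).tsum_eq }
      r₂ (fun x => hSnorm x), fun x => (hSsum x).hasSum⟩
  -- the quadratic form of S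
  have hSinner : ∀ z : H, HasSum (fun i => ‖T i z‖ ^ 2) (RCLike.re (⟪z, S z⟫)) := by
    intro z
    have h1 : HasSum (fun i => ⟪z, ContinuousLinearMap.adjoint (T i) (T i z)⟫) ⟪z, S z⟫ :=
      (innerSL ℂ z).hasSum (hSapp z)
    have h2 : HasSum (fun i => RCLike.re ⟪z, ContinuousLinearMap.adjoint (T i) (T i z)⟫)
        (RCLike.re ⟪z, S z⟫) := (RCLike.reCLM (K := ℂ)).hasSum h1
    convert h2 using 2 with i
    rw [ContinuousLinearMap.adjoint_inner_right]
    exact (inner_self_eq_norm_sq _).symm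
  have hcoer : ∀ z : H, r₁ * ‖z‖ ^ 2 ≤ RCLike.re (⟪z, S z⟫) := by
    intro z
    have := (hSinner z).tsum_eq
    rw [← this]
    exact (hframe z).1
  have hanti : ∀ z : H, r₁ * ‖z‖ ≤ ‖S z‖ := by
    intro z
    rcases eq_or_ne z 0 with rfl | hz
    · simp
    have h1 : RCLike.re (⟪z, S z⟫) ≤ ‖z‖ * ‖S z‖ :=
      le_trans (RCLike.re_le_norm _) (norm_inner_le_norm _ _)
    have hz0 : (0:ℝ) < ‖z‖ := norm_pos_iff.mpr hz
    have := hcoer z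
    nlinarith
  -- surjectivity of S
  have hSsurj : Function.Surjective S := by
    have hbound : ∀ z : H, ‖z‖ ≤ (⟨r₁⁻¹, by positivity⟩ : NNReal) * ‖S z‖ := by
      intro z
      have h := hanti z
      have h2 : ‖z‖ ≤ r₁⁻¹ * ‖S z‖ := by
        rw [le_inv_mul_iff₀ hr₁]; linarith
      exact h2
    have hAL : AntilipschitzWith _ S := AddMonoidHomClass.antilipschitz_of_bound S hbound
    have hclosed : IsClosed (Set.range S) := hAL.isClosed_range S.uniformContinuous
    have hrange : ((LinearMap.range (S : H →ₗ[ℂ] H) : Submodule ℂ H) : Set H) = Set.range S := rfl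
    have hclosed' : IsClosed ((LinearMap.range (S : H →ₗ[ℂ] H) : Submodule ℂ H) : Set H) := by
      rw [hrange]; exact hclosed
    haveI : CompleteSpace (LinearMap.range (S : H →ₗ[ℂ] H)) := hclosed'.completeSpace_coe
    have hbot : (LinearMap.range (S : H →ₗ[ℂ] H))ᗮ = ⊥ := by
      rw [eq_bot_iff]
      intro u hu
      have h1 : ⟪S u, u⟫ = 0 := by
        exact (Submodule.mem_orthogonal _ u).mp hu (S u) (LinearMap.mem_range_self _ u)
      have h2 : RCLike.re (⟪u, S u⟫) = 0 := by
        rw [← inner_conj_symm, h1]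
        simp
      have := hcoer u
      have hnz : ‖u‖ ^ 2 ≤ 0 := by nlinarith
      have : u = 0 := by
        have : ‖u‖ = 0 := by nlinarith [norm_nonneg u]
        simpa using this
      simp [this]
    have htop : LinearMap.range (S : H →ₗ[ℂ] H) = ⊤ := (Submodule.orthogonal_eq_bot_iff).mp hbot
    exact LinearMap.range_eq_top.mp htop
  intro x
  -- upper frame bound
  have hubF : ∀ F : Finset ℕ, ∑ i ∈ F, ‖R i x‖ ^ 2 ≤
      (Real.sqrt r₂ * (1 + l) + μ) ^ 2 * ‖x‖ ^ 2 := by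
    intro F
    set a := Real.sqrt (∑ i ∈ F, ‖R i x‖ ^ 2) with ha
    have ha0 : 0 ≤ a := Real.sqrt_nonneg _
    have ha2 : a ^ 2 = ∑ i ∈ F, ‖R i x‖ ^ 2 :=
      Real.sq_sqrt (Finset.sum_nonneg fun i _ => sq_nonneg _)
    have key1 : ∑ i ∈ F, ‖R i x‖ ^ 2 ≤
        ‖∑ i ∈ F, ContinuousLinearMap.adjoint (R i) (R i x)‖ * ‖x‖ := by
      have h2 : ⟪∑ i ∈ F, ContinuousLinearMap.adjoint (R i) (R i x), x⟫ =
          ∑ i ∈ F, ⟪R i x, R i x⟫ := by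
        rw [sum_inner]
        exact Finset.sum_congr rfl fun i _ => ContinuousLinearMap.adjoint_inner_left _ _ _
      have h3 : RCLike.re ⟪∑ i ∈ F, ContinuousLinearMap.adjoint (R i) (R i x), x⟫ =
          ∑ i ∈ F, ‖R i x‖ ^ 2 := by
        rw [h2, map_sum]
        exact Finset.sum_congr rfl fun i _ => inner_self_eq_norm_sq _
      rw [← h3]
      exact le_trans (RCLike.re_le_norm _) (norm_inner_le_norm _ _)
    have key2 : ‖∑ i ∈ F, ContinuousLinearMap.adjoint (R i) (R i x)‖ ≤
        (Real.sqrt r₂ * (1 + l) + μ) * a := by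
      have hp := hpert F (fun i => R i x)
      have hf := hfin F (fun i => R i x)
      have hdecomp : ∑ i ∈ F, ContinuousLinearMap.adjoint (R i) (R i x) =
          ∑ i ∈ F, ContinuousLinearMap.adjoint (T i) (R i x) -
            ∑ i ∈ F, (ContinuousLinearMap.adjoint (T i) (R i x) -
              ContinuousLinearMap.adjoint (R i) (R i x)) := by
        rw [Finset.sum_sub_distrib]; abel
      calc ‖∑ i ∈ F, ContinuousLinearMap.adjoint (R i) (R i x)‖
          ≤ ‖∑ i ∈ F, ContinuousLinearMap.adjoint (T i) (R i x)‖ +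
            ‖∑ i ∈ F, (ContinuousLinearMap.adjoint (T i) (R i x) -
              ContinuousLinearMap.adjoint (R i) (R i x))‖ := by
            rw [hdecomp]; exact norm_sub_le _ _
        _ ≤ ‖∑ i ∈ F, ContinuousLinearMap.adjoint (T i) (R i x)‖ +
            (l * ‖∑ i ∈ F, ContinuousLinearMap.adjoint (T i) (R i x)‖ + μ * a) := by
            exact add_le_add_right hp _
        _ = (1 + l) * ‖∑ i ∈ F, ContinuousLinearMap.adjoint (T i) (R i x)‖ + μ * a := by
            ring
        _ ≤ (1 + l) * (Real.sqrt r₂ * a) + μ * a := by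
            have : (0:ℝ) ≤ 1 + l := by linarith
            exact add_le_add_left (mul_le_mul_of_nonneg_left hf this) _
        _ = (Real.sqrt r₂ * (1 + l) + μ) * a := by ring
    have hxnn : (0:ℝ) ≤ ‖x‖ := norm_nonneg x
    nlinarith [key1, key2, ha2, ha0, hxnn, sq_nonneg (a - (Real.sqrt r₂ * (1 + l) + μ) * ‖x‖),
      mul_le_mul_of_nonneg_right key2 hxnn]
  have hsumR : Summable (fun i => ‖R i x‖ ^ 2) :=
    summable_of_sum_le (fun i => sq_nonneg _) hubF
  have hub : ∑' i, ‖R i x‖ ^ 2 ≤ (Real.sqrt r₂ * (1 + l) + μ) ^ 2 * ‖x‖ ^ 2 :=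
    Summable.tsum_le_of_sum_le hsumR hubF
  have hc₂ : (Real.sqrt r₂ * (1 + l) + μ) ^ 2 = r₂ * (1 + (l + μ / Real.sqrt r₂)) ^ 2 := by
    have h : Real.sqrt r₂ * (1 + (l + μ / Real.sqrt r₂)) = Real.sqrt r₂ * (1 + l) + μ := by
      field_simp
      ring
    rw [← h, mul_pow, hs₂sq]
  constructor
  · -- lower frame bound
    rcases eq_or_ne x 0 with rfl | hx
    · simpa using tsum_nonneg (fun i => sq_nonneg ‖R i 0‖)
    obtain ⟨z, hz⟩ := hSsurj x
    have hzsumT := hsumT z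
    set b := Real.sqrt (∑' i, ‖T i z‖ ^ 2) with hbdef
    have hbnn : 0 ≤ b := Real.sqrt_nonneg _
    have hb2 : b ^ 2 = ∑' i, ‖T i z‖ ^ 2 :=
      Real.sq_sqrt (tsum_nonneg fun i => sq_nonneg _)
    have hbsum : HasSum (fun i => ‖T i z‖ ^ 2) (b ^ 2) := by
      rw [hb2]; exact hzsumT.hasSum
    have hre : RCLike.re ⟪z, S z⟫ = b ^ 2 := by
      rw [hb2, ← (hSinner z).tsum_eq]
    have hz0 : z ≠ 0 := by
      rintro rfl
      apply hx
      rw [← hz]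
      simp
    have hnz : 0 < ‖z‖ := norm_pos_iff.mpr hz0
    have hb2lb : r₁ * ‖z‖ ^ 2 ≤ b ^ 2 := by rw [hb2]; exact (hframe z).1
    have hbpos : 0 < b := by nlinarith [mul_pos hr₁ (pow_pos hnz 2)]
    have hbz : b ^ 2 = RCLike.re ⟪z, x⟫ := by rw [← hre, hz]
    have hzx : RCLike.re ⟪z, x⟫ ≤ ‖z‖ * ‖x‖ :=
      le_trans (RCLike.re_le_norm _) (norm_inner_le_norm _ _)
    have hxp : 0 < ‖x‖ := norm_pos_iff.mpr hx
    have hble : b ≤ ‖x‖ / Real.sqrt r₁ := by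
      have hzle : r₁ * ‖z‖ ≤ ‖x‖ := by nlinarith
      have h1 : b ^ 2 ≤ ‖x‖ ^ 2 / r₁ := by
        have : b ^ 2 ≤ ‖z‖ * ‖x‖ := by nlinarith
        rw [le_div_iff₀ hr₁]
        nlinarith
      have h2 := Real.sqrt_le_sqrt h1
      rwa [Real.sqrt_sq hbnn, Real.sqrt_div (sq_nonneg _), Real.sqrt_sq (norm_nonneg _)] at h2
    set A := Real.sqrt (∑' i, ‖R i x‖ ^ 2) with hA
    have hAnn : 0 ≤ A := Real.sqrt_nonneg _
    have hA2 : A ^ 2 = ∑' i, ‖R i x‖ ^ 2 :=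
      Real.sq_sqrt (tsum_nonneg fun i => sq_nonneg _)
    have hkey : ∀ F : Finset ℕ,
        RCLike.re ⟪x, ∑ i ∈ F, ContinuousLinearMap.adjoint (T i) (T i z)⟫ -
          ‖x‖ * (l * ‖∑ i ∈ F, ContinuousLinearMap.adjoint (T i) (T i z)‖ +
            μ * Real.sqrt (∑ i ∈ F, ‖T i z‖ ^ 2)) ≤ b * A := by
      intro F
      have e1 : RCLike.re ⟪x, ∑ i ∈ F, ContinuousLinearMap.adjoint (R i) (T i z)⟫ ≤
          Real.sqrt (∑ i ∈ F, ‖R i x‖ ^ 2) * Real.sqrt (∑ i ∈ F, ‖T i z‖ ^ 2) := by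
        have h2 : ⟪x, ∑ i ∈ F, ContinuousLinearMap.adjoint (R i) (T i z)⟫ =
            ∑ i ∈ F, ⟪R i x, T i z⟫ := by
          rw [inner_sum]
          exact Finset.sum_congr rfl fun i _ =>
            ContinuousLinearMap.adjoint_inner_right _ _ _
        rw [h2, map_sum]
        calc ∑ i ∈ F, RCLike.re ⟪R i x, T i z⟫
            ≤ ∑ i ∈ F, ‖R i x‖ * ‖T i z‖ :=
              Finset.sum_le_sum fun i _ =>
                le_trans (RCLike.re_le_norm _) (norm_inner_le_norm _ _)
          _ ≤ _ := cs_sum F _ _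
      have e2 : Real.sqrt (∑ i ∈ F, ‖R i x‖ ^ 2) ≤ A :=
        Real.sqrt_le_sqrt (Summable.sum_le_tsum F (fun i _ => sq_nonneg _) hsumR)
      have e3 : Real.sqrt (∑ i ∈ F, ‖T i z‖ ^ 2) ≤ b :=
        Real.sqrt_le_sqrt (Summable.sum_le_tsum F (fun i _ => sq_nonneg _) hzsumT)
      have e4 : RCLike.re ⟪x, ∑ i ∈ F, ContinuousLinearMap.adjoint (R i) (T i z)⟫ ≤
          b * A := by
        calc RCLike.re ⟪x, ∑ i ∈ F, ContinuousLinearMap.adjoint (R i) (T i z)⟫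
            ≤ Real.sqrt (∑ i ∈ F, ‖R i x‖ ^ 2) * Real.sqrt (∑ i ∈ F, ‖T i z‖ ^ 2) := e1
          _ ≤ A * b := mul_le_mul e2 e3 (Real.sqrt_nonneg _) hAnn
          _ = b * A := mul_comm _ _
      have hdec : ∑ i ∈ F, ContinuousLinearMap.adjoint (R i) (T i z) =
          ∑ i ∈ F, ContinuousLinearMap.adjoint (T i) (T i z) -
            ∑ i ∈ F, (ContinuousLinearMap.adjoint (T i) (T i z) -
              ContinuousLinearMap.adjoint (R i) (T i z)) := by
        rw [Finset.sum_sub_distrib]; abel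
      have e5 : RCLike.re ⟪x, ∑ i ∈ F, ContinuousLinearMap.adjoint (R i) (T i z)⟫ =
          RCLike.re ⟪x, ∑ i ∈ F, ContinuousLinearMap.adjoint (T i) (T i z)⟫ -
            RCLike.re ⟪x, ∑ i ∈ F, (ContinuousLinearMap.adjoint (T i) (T i z) -
              ContinuousLinearMap.adjoint (R i) (T i z))⟫ := by
        rw [hdec, inner_sub_right, map_sub]
      have e6 : RCLike.re ⟪x, ∑ i ∈ F, (ContinuousLinearMap.adjoint (T i) (T i z) -
            ContinuousLinearMap.adjoint (R i) (T i z))⟫ ≤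
          ‖x‖ * (l * ‖∑ i ∈ F, ContinuousLinearMap.adjoint (T i) (T i z)‖ +
            μ * Real.sqrt (∑ i ∈ F, ‖T i z‖ ^ 2)) := by
        calc RCLike.re ⟪x, ∑ i ∈ F, (ContinuousLinearMap.adjoint (T i) (T i z) -
              ContinuousLinearMap.adjoint (R i) (T i z))⟫
            ≤ ‖x‖ * ‖∑ i ∈ F, (ContinuousLinearMap.adjoint (T i) (T i z) -
              ContinuousLinearMap.adjoint (R i) (T i z))‖ :=
              le_trans (RCLike.re_le_norm _) (norm_inner_le_norm _ _)
          _ ≤ _ := mul_le_mul_of_nonneg_left (hpert F (fun i => T i z)) (norm_nonneg x)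
      linarith [e4, e5 ▸ e4, e6]
    have hT : Filter.Tendsto
        (fun F : Finset ℕ => ∑ i ∈ F, ContinuousLinearMap.adjoint (T i) (T i z))
        Filter.atTop (nhds x) := by
      have h := hSapp z
      rw [hz] at h
      exact h
    have hc1 : Filter.Tendsto
        (fun F : Finset ℕ =>
          RCLike.re ⟪x, ∑ i ∈ F, ContinuousLinearMap.adjoint (T i) (T i z)⟫)
        Filter.atTop (nhds (RCLike.re ⟪x, x⟫)) :=
      (RCLike.continuous_re.tendsto _).comp (((innerSL ℂ x).continuous.tendsto x).comp hT)
    have hc2 : Filter.Tendsto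
        (fun F : Finset ℕ => ‖∑ i ∈ F, ContinuousLinearMap.adjoint (T i) (T i z)‖)
        Filter.atTop (nhds ‖x‖) := (continuous_norm.tendsto x).comp hT
    have hc3 : Filter.Tendsto
        (fun F : Finset ℕ => Real.sqrt (∑ i ∈ F, ‖T i z‖ ^ 2))
        Filter.atTop (nhds b) := by
      have h := (Real.continuous_sqrt.tendsto _).comp hbsum
      rwa [Real.sqrt_sq hbnn] at h
    have hlim : Filter.Tendsto
        (fun F : Finset ℕ =>
          RCLike.re ⟪x, ∑ i ∈ F, ContinuousLinearMap.adjoint (T i) (T i z)⟫ -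
            ‖x‖ * (l * ‖∑ i ∈ F, ContinuousLinearMap.adjoint (T i) (T i z)‖ +
              μ * Real.sqrt (∑ i ∈ F, ‖T i z‖ ^ 2)))
        Filter.atTop (nhds (RCLike.re ⟪x, x⟫ - ‖x‖ * (l * ‖x‖ + μ * b))) :=
      hc1.sub (((hc2.const_mul l).add (hc3.const_mul μ)).const_mul ‖x‖)
    have hfinal : RCLike.re ⟪x, x⟫ - ‖x‖ * (l * ‖x‖ + μ * b) ≤ b * A :=
      le_of_tendsto hlim (Filter.Eventually.of_forall hkey)
    have hx2 : RCLike.re ⟪x, x⟫ = ‖x‖ ^ 2 := inner_self_eq_norm_sq x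
    rw [hx2] at hfinal
    have hstep : (1 - (l + μ / Real.sqrt r₁)) * ‖x‖ ^ 2 ≤ (‖x‖ / Real.sqrt r₁) * A := by
      have h1 : μ * b * ‖x‖ ≤ μ * (‖x‖ / Real.sqrt r₁) * ‖x‖ := by
        have := mul_le_mul_of_nonneg_left hble hμ
        exact mul_le_mul_of_nonneg_right this hxp.le
      have h2 : b * A ≤ (‖x‖ / Real.sqrt r₁) * A := mul_le_mul_of_nonneg_right hble hAnn
      have h3 : μ * (‖x‖ / Real.sqrt r₁) * ‖x‖ = (μ / Real.sqrt r₁) * ‖x‖ ^ 2 := by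
        field_simp
      nlinarith [hfinal, h1, h2]
    have hA1 : Real.sqrt r₁ * (1 - (l + μ / Real.sqrt r₁)) * ‖x‖ ≤ A := by
      have h3 := mul_le_mul_of_nonneg_left hstep hs₁.le
      have h4 : Real.sqrt r₁ * ((‖x‖ / Real.sqrt r₁) * A) = ‖x‖ * A := by
        field_simp
      rw [h4] at h3
      have h5 : (Real.sqrt r₁ * (1 - (l + μ / Real.sqrt r₁)) * ‖x‖) * ‖x‖ ≤ A * ‖x‖ := by
        nlinarith [h3]
      exact le_of_mul_le_mul_right h5 hxp
    have h1c : 0 ≤ 1 - (l + μ / Real.sqrt r₁) := by linarith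
    have hlhsnn : 0 ≤ Real.sqrt r₁ * (1 - (l + μ / Real.sqrt r₁)) * ‖x‖ :=
      mul_nonneg (mul_nonneg hs₁.le h1c) (norm_nonneg x)
    calc r₁ * (1 - (l + μ / Real.sqrt r₁)) ^ 2 * ‖x‖ ^ 2
        = (Real.sqrt r₁ * (1 - (l + μ / Real.sqrt r₁)) * ‖x‖) ^ 2 := by
          rw [mul_pow, mul_pow, hs₁sq]
      _ ≤ A ^ 2 := pow_le_pow_left₀ hlhsnn hA1 2
      _ = ∑' i, ‖R i x‖ ^ 2 := hA2
  · calc ∑' i, ‖R i x‖ ^ 2 ≤ (Real.sqrt r₂ * (1 + l) + μ) ^ 2 * ‖x‖ ^ 2 := hub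
      _ = r₂ * (1 + (l + μ / Real.sqrt r₂)) ^ 2 * ‖x‖ ^ 2 := by rw [hc₂]
end

section
/- Let H be a complex Hilbert space, (Hᵢ)_{i∈ℕ} a sequence of complex Hilbert spaces, (Tᵢ : H → Hᵢ)_{i∈ℕ} a frame of operators for H with bounds r₁, r₂ and invertible frame operator S, and for each i let (e_{i,k})_{k∈ℕ} be a Hilbert (orthonormal) basis of Hᵢ. Put x_{i,k} := Tᵢ†(e_{i,k}) and y_{i,k} := (Tᵢ ∘ S⁻¹)†(e_{i,k}) = S⁻¹(x_{i,k}). Then the induced sequences form a pair of dual frames for H: for every x ∈ H, x = Σ_{i,k∈ℕ} ⟨x_{i,k}, x⟩ y_{i,k}, the series converging in H. -/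
open scoped ComplexInnerProductSpace

section Aux

variable {E : Type*} [NormedAddCommGroup E] [InnerProductSpace ℂ E] [CompleteSpace E]

/-- Parseval identity for a Hilbert basis, norm-squared form. -/
lemma hilbertBasis_parseval (b : HilbertBasis ℕ ℂ E) (w : E) :
    HasSum (fun k => ‖⟪b k, w⟫‖ ^ 2) (‖w‖ ^ 2) := by
  have h := b.hasSum_inner_mul_inner w w
  have h2 := h.mapL Complex.reCLM
  have e1 : ∀ k, Complex.reCLM (⟪w, b k⟫ * ⟪b k, w⟫) = ‖⟪b k, w⟫‖ ^ 2 := by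
    intro k
    have h1 : ⟪w, b k⟫ = (starRingEnd ℂ) ⟪b k, w⟫ := (inner_conj_symm w (b k)).symm
    rw [h1, RCLike.conj_mul]
    simp [← Complex.ofReal_pow]
  have e2 : Complex.reCLM ⟪w, w⟫ = ‖w‖ ^ 2 := by
    rw [inner_self_eq_norm_sq_to_K]
    simp [← Complex.ofReal_pow]
  rw [e2] at h2
  exact h2.congr_fun fun k => (e1 k).symm

end Aux

set_option maxHeartbeats 1000000

/-- The sequences induced by a pair of dual frames of operators `(Tᵢ)` and `(Uᵢ = Tᵢ ∘ S⁻¹)`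
form a pair of dual frames: `x = Σ_{i,k} ⟨x_{i,k}, x⟩ y_{i,k}` where `x_{i,k} = Tᵢ†(e_{i,k})`
and `y_{i,k} = S⁻¹(x_{i,k})`. -/
theorem induced_sequences_dual_frames
    {H : Type*} [NormedAddCommGroup H] [InnerProductSpace ℂ H] [CompleteSpace H]
    (G : ℕ → Type*) [∀ i, NormedAddCommGroup (G i)] [∀ i, InnerProductSpace ℂ (G i)]
    [∀ i, CompleteSpace (G i)]
    (T : ∀ i, H →L[ℂ] G i) (e : ∀ i, HilbertBasis ℕ ℂ (G i))
    (r₁ r₂ : ℝ) (hr₁ : 0 < r₁) (hr₁₂ : r₁ ≤ r₂)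
    (hframe : ∀ x : H,
        r₁ * ‖x‖ ^ 2 ≤ ∑' i, ‖T i x‖ ^ 2 ∧ ∑' i, ‖T i x‖ ^ 2 ≤ r₂ * ‖x‖ ^ 2)
    (S Sinv : H →L[ℂ] H)
    (hS : ∀ x : H, HasSum (fun i => ContinuousLinearMap.adjoint (T i) (T i x)) (S x))
    (hSinv₁ : S.comp Sinv = 1) (hSinv₂ : Sinv.comp S = 1) :
    ∀ x : H,
      HasSum
        (fun p : ℕ × ℕ =>
          ⟪ContinuousLinearMap.adjoint (T p.1) (e p.1 p.2), x⟫ •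
            Sinv (ContinuousLinearMap.adjoint (T p.1) (e p.1 p.2)))
        x := by
  classical
  intro x
  have hr₂ : 0 < r₂ := lt_of_lt_of_le hr₁ hr₁₂
  set A : ∀ i, G i →L[ℂ] H := fun i => ContinuousLinearMap.adjoint (T i) with hA
  set v : ℕ × ℕ → H := fun p => A p.1 (e p.1 p.2) with hv
  -- the coefficient of p, viewed relative to any vector y
  have hinner : ∀ (y : H) (p : ℕ × ℕ), ⟪v p, y⟫ = ⟪e p.1 p.2, T p.1 y⟫ := fun y p =>
    ContinuousLinearMap.adjoint_inner_left (T p.1) y (e p.1 p.2)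
  -- summability of i ↦ ‖T i y‖²
  have sumTsq : ∀ y : H, Summable (fun i => ‖T i y‖ ^ 2) := by
    intro y
    by_cases hy : y = 0
    · have h0 : (fun i => ‖T i y‖ ^ 2) = fun _ => (0 : ℝ) := by
        funext i; rw [hy]; simp
      rw [h0]; exact summable_zero
    · by_contra hns
      have h0 := tsum_eq_zero_of_not_summable hns
      have h1 := (hframe y).1
      rw [h0] at h1
      have hny : 0 < ‖y‖ := norm_pos_iff.2 hy
      nlinarith [mul_pos hr₁ (pow_pos hny 2)]
  -- summability of the double family of squared coefficients
  have csq_sum : ∀ y : H, Summable (fun p : ℕ × ℕ => ‖⟪e p.1 p.2, T p.1 y⟫‖ ^ 2) := by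
    intro y
    rw [summable_prod_of_nonneg (fun p => sq_nonneg _)]
    refine ⟨fun i => (hilbertBasis_parseval (e i) (T i y)).summable, ?_⟩
    have ht : ∀ i, ∑' k, ‖⟪e i k, T i y⟫‖ ^ 2 = ‖T i y‖ ^ 2 := fun i =>
      (hilbertBasis_parseval (e i) (T i y)).tsum_eq
    exact (sumTsq y).congr fun i => (ht i).symm
  have csq_bound : ∀ y : H,
      ∑' p : ℕ × ℕ, ‖⟪e p.1 p.2, T p.1 y⟫‖ ^ 2 ≤ r₂ * ‖y‖ ^ 2 := by
    intro y
    rw [Summable.tsum_prod' (csq_sum y) fun i => (hilbertBasis_parseval (e i) (T i y)).summable]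
    have ht : ∀ i, ∑' k, ‖⟪e i k, T i y⟫‖ ^ 2 = ‖T i y‖ ^ 2 := fun i =>
      (hilbertBasis_parseval (e i) (T i y)).tsum_eq
    calc ∑' i, ∑' k, ‖⟪e i k, T i y⟫‖ ^ 2 = ∑' i, ‖T i y‖ ^ 2 := tsum_congr ht
      _ ≤ r₂ * ‖y‖ ^ 2 := (hframe y).2

  set c : ℕ × ℕ → ℂ := fun p => ⟪e p.1 p.2, T p.1 x⟫ with hc
  -- key finite estimate
  have key : ∀ t : Finset (ℕ × ℕ),
      ‖∑ p ∈ t, c p • v p‖ ^ 2 ≤ r₂ * ∑ p ∈ t, ‖c p‖ ^ 2 := by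
    intro t
    set z := ∑ p ∈ t, c p • v p with hz
    have hcs : 0 ≤ ∑ p ∈ t, ‖c p‖ ^ 2 := Finset.sum_nonneg fun p _ => sq_nonneg _
    have h2 : ‖z‖ ^ 2 ≤ ∑ p ∈ t, ‖c p‖ * ‖⟪v p, z⟫‖ := by
      calc ‖z‖ ^ 2 = RCLike.re ⟪z, z⟫ := (inner_self_eq_norm_sq z).symm
        _ ≤ ‖(⟪z, z⟫ : ℂ)‖ := RCLike.re_le_norm _
        _ = ‖∑ p ∈ t, ⟪c p • v p, z⟫‖ := by rw [hz, sum_inner]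
        _ ≤ ∑ p ∈ t, ‖(⟪c p • v p, z⟫ : ℂ)‖ := norm_sum_le _ _
        _ = ∑ p ∈ t, ‖c p‖ * ‖⟪v p, z⟫‖ := by
            refine Finset.sum_congr rfl fun p _ => ?_
            rw [inner_smul_left]
            simp [norm_mul]
    have h3 : (∑ p ∈ t, ‖c p‖ * ‖⟪v p, z⟫‖) ^ 2 ≤
        (∑ p ∈ t, ‖c p‖ ^ 2) * ∑ p ∈ t, ‖⟪v p, z⟫‖ ^ 2 :=
      Finset.sum_mul_sq_le_sq_mul_sq t _ _
    have h4 : ∑ p ∈ t, ‖(⟪v p, z⟫ : ℂ)‖ ^ 2 ≤ r₂ * ‖z‖ ^ 2 := by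
      have heq : ∀ p : ℕ × ℕ, ‖(⟪v p, z⟫ : ℂ)‖ ^ 2 = ‖⟪e p.1 p.2, T p.1 z⟫‖ ^ 2 := by
        intro p; rw [hinner]
      calc ∑ p ∈ t, ‖(⟪v p, z⟫ : ℂ)‖ ^ 2
          = ∑ p ∈ t, ‖⟪e p.1 p.2, T p.1 z⟫‖ ^ 2 := Finset.sum_congr rfl fun p _ => heq p
        _ ≤ ∑' p : ℕ × ℕ, ‖⟪e p.1 p.2, T p.1 z⟫‖ ^ 2 :=
            Summable.sum_le_tsum t (fun p _ => sq_nonneg _) (csq_sum z)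
        _ ≤ r₂ * ‖z‖ ^ 2 := csq_bound z
    by_cases hz0 : ‖z‖ = 0
    · rw [hz0]
      have : (0:ℝ) ^ 2 = 0 := by norm_num
      rw [this]
      exact mul_nonneg hr₂.le hcs
    · have hzpos : 0 < ‖z‖ ^ 2 := by positivity
      have hsum2 : (‖z‖ ^ 2) * (‖z‖ ^ 2) ≤ (r₂ * ∑ p ∈ t, ‖c p‖ ^ 2) * ‖z‖ ^ 2 := by
        nlinarith [h2, h3, h4, norm_nonneg z]
      exact le_of_mul_le_mul_right hsum2 hzpos
  -- summability of the full family
  have hgsum : Summable (fun p : ℕ × ℕ => c p • v p) := by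
    rw [summable_iff_vanishing_norm]
    intro ε hε
    have hε' : 0 < ε ^ 2 / r₂ := by positivity
    obtain ⟨s, hs⟩ := summable_iff_vanishing_norm.1 (csq_sum x) (ε ^ 2 / r₂) hε'
    refine ⟨s, fun t ht => ?_⟩
    have h1 := hs t ht
    have h2 : ∑ p ∈ t, ‖c p‖ ^ 2 < ε ^ 2 / r₂ := by
      have hle : ∑ p ∈ t, ‖c p‖ ^ 2 ≤ ‖∑ p ∈ t, ‖⟪e p.1 p.2, T p.1 x⟫‖ ^ 2‖ := by
        rw [Real.norm_eq_abs]
        exact le_abs_self _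
      exact lt_of_le_of_lt hle h1
    have h3 := key t
    have h4 : ‖∑ p ∈ t, c p • v p‖ ^ 2 < ε ^ 2 := by
      calc ‖∑ p ∈ t, c p • v p‖ ^ 2 ≤ r₂ * ∑ p ∈ t, ‖c p‖ ^ 2 := h3
        _ < r₂ * (ε ^ 2 / r₂) := by exact (mul_lt_mul_iff_right₀ hr₂).2 h2
        _ = ε ^ 2 := by field_simp
    nlinarith [norm_nonneg (∑ p ∈ t, c p • v p)]
  -- fiberwise sums
  have fib : ∀ i, HasSum (fun k => c (i, k) • v (i, k)) (A i (T i x)) := by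
    intro i
    have h := (e i).hasSum_repr (T i x)
    have h2 := (A i).hasSum h
    refine h2.congr_fun fun k => ?_
    rw [map_smul, HilbertBasis.repr_apply_apply]
  -- identify the total sum
  have htot : HasSum (fun i => A i (T i x)) (∑' p : ℕ × ℕ, c p • v p) :=
    hgsum.hasSum.prod_fiberwise fib
  have hSx : (∑' p : ℕ × ℕ, c p • v p) = S x := htot.unique (hS x)
  have hg : HasSum (fun p : ℕ × ℕ => c p • v p) (S x) := hSx ▸ hgsum.hasSum
  have hmap := Sinv.hasSum hg
  have hx : Sinv (S x) = x := by
    rw [← ContinuousLinearMap.comp_apply, hSinv₂, ContinuousLinearMap.one_apply]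
  rw [hx] at hmap
  refine hmap.congr_fun fun p => ?_
  rw [map_smul, hinner x p]
end
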